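/- arXiv:0809.3106 — 4 statements merged into one kernel-verified Lean document; each statement's English description precedes it below -/
import Mathlib

section
/- For every φ ∈ L^∞(X,m) and every α-invariant measure μ ∈ M_α(X,m), one has λ(φ) ≥ μ(φ) + τ(μ). -/
open MeasureTheory Filter Topology
open scoped Classical ENNReal NNReal

noncomputable section

namespace TEntropyPaper

variable {X : Type*} [MeasurableSpace X]

/-- The mapping `α` is measurable and the shift operator `A f = f ∘ α` is bounded on
`L¹(X, m)`; equivalently `m (α⁻¹ G) ≤ C · m G` for all measurable `G`. -/
def ShiftBounded (m : Measure X) (α : X → X) : Prop :=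
  Measurable α ∧ ∃ C : ℝ≥0, ∀ s : Set X, MeasurableSet s → m (α ⁻¹' s) ≤ (C : ℝ≥0∞) * m s

/-- A positive normalized linear functional on `L^∞(X, m)`, encoded as a real-valued
map on functions `X → ℝ` which is linear and positive on essentially bounded
(strongly) measurable functions, respects `m`-a.e. equality, takes the value `1` at the
constant function `1` and (as a normalization) vanishes on functions not in `L^∞`. -/
structure PosFunctional (m : Measure X) where
  toFun : (X → ℝ) → ℝ
  map_add' : ∀ f g : X → ℝ, MemLp f ⊤ m → MemLp g ⊤ m → toFun (f + g) = toFun f + toFun g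
  map_smul' : ∀ (c : ℝ) (f : X → ℝ), MemLp f ⊤ m → toFun (c • f) = c * toFun f
  nonneg' : ∀ f : X → ℝ, MemLp f ⊤ m → (0 : X → ℝ) ≤ᵐ[m] f → 0 ≤ toFun f
  map_one' : toFun (fun _ => 1) = 1
  congr_ae' : ∀ f g : X → ℝ, MemLp f ⊤ m → MemLp g ⊤ m → f =ᵐ[m] g → toFun f = toFun g
  zero_of_ne' : ∀ f : X → ℝ, ¬ MemLp f ⊤ m → toFun f = 0

/-- Evaluation of a functional in `M(X,m)` against the `L^∞` test functions. -/
def evalMap (m : Measure X) (μ : PosFunctional m) : {f : X → ℝ // MemLp f ⊤ m} → ℝ :=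
  fun f => μ.toFun f.1

/-- The weak-* topology on `M(X,m)`: the topology of pointwise convergence on `L^∞`
test functions. -/
instance (m : Measure X) : TopologicalSpace (PosFunctional m) :=
  TopologicalSpace.induced (evalMap m) inferInstance

/-- `α`-invariance of a functional `μ ∈ M(X,m)`: `μ(f ∘ α) = μ(f)`. -/
def PosFunctional.Invariant (α : X → X) {m : Measure X} (μ : PosFunctional m) : Prop :=
  ∀ f : X → ℝ, MemLp f ⊤ m → μ.toFun (f ∘ α) = μ.toFun f

/-- A measurable partition of unity on `X`: a finite set of nonnegative functions in
`L^∞(X,m)` summing to `1` almost everywhere. -/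
def IsPartUnity (m : Measure X) (D : Finset (X → ℝ)) : Prop :=
  (∀ g ∈ D, MemLp g ⊤ m ∧ (0 : X → ℝ) ≤ᵐ[m] g) ∧ ∀ᵐ x ∂m, ∑ g ∈ D, g x = 1

/-- Birkhoff sum `S_n φ = φ + φ∘α + ⋯ + φ∘α^{n-1}`. -/
def birkhoff (α : X → X) (φ : X → ℝ) (n : ℕ) (x : X) : ℝ :=
  ∑ i ∈ Finset.range n, φ (α^[i] x)

/-- The unit sphere of `L¹(X,m)`. -/
def UnitL1 (m : Measure X) : Set (X → ℝ) := {f | Integrable f m ∧ ∫ x, |f x| ∂m = 1}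

/-- The integral `∫_X g · |f ∘ αⁿ| dm`. -/
def wInt (m : Measure X) (α : X → X) (n : ℕ) (g f : X → ℝ) : ℝ :=
  ∫ x, g x * |f (α^[n] x)| ∂m

/-- The summand `w · ln((∫_X g·|f∘αⁿ| dm)/w)` in the definition of `t`-entropy,
with values in `EReal`: it is `0` when `w = 0` and `-∞` when the integral vanishes
while `w ≠ 0`. -/
def tauTermR (m : Measure X) (α : X → X) (n : ℕ) (w : ℝ) (f g : X → ℝ) : EReal :=
  if w = 0 then 0
  else if wInt m α n g f = 0 then ⊥
  else ((w * Real.log (wInt m α n g f / w) : ℝ) : EReal)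

/-- `τ_n(w, D)` for an abstract weight function `w` on the elements of `D`. -/
def tauNDW (m : Measure X) (α : X → X) (n : ℕ) (D : Finset (X → ℝ))
    (w : (X → ℝ) → ℝ) : EReal :=
  if ∃ g ∈ D, (∫⁻ x, ENNReal.ofReal (g x) ∂m) = 0 ∧ 0 < w g then ⊥
  else ⨆ f ∈ UnitL1 m, ∑ g ∈ D, tauTermR m α n (w g) f g

/-- `τ_n(μ, D)` for `μ ∈ M(X,m)` and a measurable partition of unity `D`. -/
def tauND (m : Measure X) (α : X → X) (μ : PosFunctional m) (n : ℕ)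
    (D : Finset (X → ℝ)) : EReal :=
  tauNDW m α n D (fun g => μ.toFun g)

/-- `τ_n(μ) = inf_D τ_n(μ, D)` over all measurable partitions of unity `D`. -/
def tauN (m : Measure X) (α : X → X) (μ : PosFunctional m) (n : ℕ) : EReal :=
  ⨅ D ∈ {D : Finset (X → ℝ) | IsPartUnity m D}, tauND m α μ n D

/-- The `t`-entropy `τ(μ) = inf_{n ≥ 1} τ_n(μ)/n`. -/
def tEntropy (m : Measure X) (α : X → X) (μ : PosFunctional m) : EReal :=
  ⨅ n : {k : ℕ // 0 < k}, ((((n : ℕ) : ℝ)⁻¹ : ℝ) : EReal) * tauN m α μ (n : ℕ)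

/-- The operator norm `‖A_φⁿ‖` of the `n`-th power of the weighted shift operator
`A_φ f = e^φ · (f ∘ α)` on `L¹(X,m)`, i.e. the supremum of `∫ e^{S_nφ}|f∘αⁿ| dm`
over the unit sphere of `L¹`. -/
def weightedOpNorm (m : Measure X) (α : X → X) (φ : X → ℝ) (n : ℕ) : ℝ :=
  sSup {r : ℝ | ∃ f ∈ UnitL1 m,
    r = ∫ x, Real.exp (birkhoff α φ n x) * |f (α^[n] x)| ∂m}

/-- `D_m`: the elements of `D` which are not `m`-a.e. zero (i.e. `∫ g dm > 0`). -/
def Dm (m : Measure X) (D : Finset (X → ℝ)) : Finset (X → ℝ) :=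
  D.filter (fun g => (∫⁻ x, ENNReal.ofReal (g x) ∂m) ≠ 0)

/-- The simplex `M(D)` of probability measures on the finite set `D`, realized as
weight functions vanishing outside `D`. -/
def MD (D : Finset (X → ℝ)) : Set ((X → ℝ) → ℝ) :=
  {w | (∀ g ∈ D, 0 ≤ w g) ∧ (∑ g ∈ D, w g) = 1 ∧ ∀ g ∉ D, w g = 0}

/-- The sum `Σ_{g ∈ D_m} w(g)·ln((∫ g·|f∘αⁿ| dm)/w(g))`. -/
def tauSumDm (m : Measure X) (α : X → X) (n : ℕ) (D : Finset (X → ℝ))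
    (w : (X → ℝ) → ℝ) (f : X → ℝ) : EReal :=
  ∑ g ∈ Dm m D, tauTermR m α n (w g) f g

/-- `τ_n(w, D)` with the sum restricted to `D_m`, for `w ∈ M(D_m)`. -/
def tauDm (m : Measure X) (α : X → X) (n : ℕ) (D : Finset (X → ℝ))
    (w : (X → ℝ) → ℝ) : EReal :=
  ⨆ f ∈ UnitL1 m, tauSumDm m α n D w f

/-- `w'` is an optimizing limit for `(w, n, D)`: there is a sequence of nonnegative
unit-norm `f_i ∈ L¹(X,m)` along which the supremum defining `τ_n(w,D)` is attained in
the limit and `w'(g) = lim_i ∫ g·(f_i∘αⁿ) dm` for each `g ∈ D_m`. -/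
def IsOptLimit (m : Measure X) (α : X → X) (n : ℕ) (D : Finset (X → ℝ))
    (w w' : (X → ℝ) → ℝ) : Prop :=
  ∃ F : ℕ → (X → ℝ),
    (∀ i, F i ∈ UnitL1 m ∧ (0 : X → ℝ) ≤ᵐ[m] F i) ∧
    (∀ g ∈ Dm m D, Tendsto (fun i => wInt m α n g (F i)) atTop (𝓝 (w' g))) ∧
    Tendsto (fun i => tauSumDm m α n D w (F i)) atTop (𝓝 (tauDm m α n D w))


section Helpers

variable {X : Type*} [MeasurableSpace X]

lemma ecoe_sum {ι : Type*} (s : Finset ι) (f : ι → ℝ) :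
    ((∑ i ∈ s, f i : ℝ) : EReal) = ∑ i ∈ s, ((f i : ℝ) : EReal) := by
  induction s using Finset.cons_induction with
  | empty => simp
  | cons a s ha ih => rw [Finset.sum_cons, Finset.sum_cons, EReal.coe_add, ih]

section shift

variable {m : Measure X} {α : X → X} (hαm : Measurable α) {C : ℝ≥0}
  (hC : ∀ s : Set X, MeasurableSet s → m (α ⁻¹' s) ≤ (C : ℝ≥0∞) * m s)

include hαm hC

lemma preimage_iterate_le (k : ℕ) {s : Set X} (hs : MeasurableSet s) :
    m ((α^[k]) ⁻¹' s) ≤ (C : ℝ≥0∞) ^ k * m s := by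
  induction k with
  | zero => simp
  | succ k ih =>
      have h1 : (α^[k+1]) ⁻¹' s = α ⁻¹' ((α^[k]) ⁻¹' s) := by
        rw [Function.iterate_succ, Set.preimage_comp]
      rw [h1]
      calc m (α ⁻¹' ((α^[k]) ⁻¹' s)) ≤ (C : ℝ≥0∞) * m ((α^[k]) ⁻¹' s) :=
            hC _ ((hαm.iterate k) hs)
        _ ≤ (C : ℝ≥0∞) * ((C : ℝ≥0∞) ^ k * m s) := by
            exact mul_le_mul_right ih _
        _ = (C : ℝ≥0∞) ^ (k+1) * m s := by ring

lemma lintegral_comp_iterate_le (k : ℕ) {g : X → ℝ≥0∞} (hg : Measurable g) :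
    ∫⁻ x, g (α^[k] x) ∂m ≤ (C : ℝ≥0∞) ^ k * ∫⁻ x, g x ∂m := by
  have hmap : m.map (α^[k]) ≤ ((C : ℝ≥0∞) ^ k) • m := by
    rw [Measure.le_iff]
    intro s hs
    rw [Measure.map_apply (hαm.iterate k) hs, Measure.smul_apply, smul_eq_mul]
    exact preimage_iterate_le hαm hC k hs
  calc ∫⁻ x, g (α^[k] x) ∂m = ∫⁻ y, g y ∂(m.map (α^[k])) :=
        (lintegral_map hg (hαm.iterate k)).symm
    _ ≤ ∫⁻ y, g y ∂(((C : ℝ≥0∞) ^ k) • m) := lintegral_mono' hmap le_rfl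
    _ = (C : ℝ≥0∞) ^ k * ∫⁻ x, g x ∂m := lintegral_smul_measure _ _

lemma null_preimage_iterate (k : ℕ) {s : Set X} (hs : m s = 0) :
    m ((α^[k]) ⁻¹' s) = 0 := by
  obtain ⟨t, hst, htm, ht0⟩ := exists_measurable_superset_of_null hs
  refine le_antisymm ?_ zero_le
  calc m ((α^[k]) ⁻¹' s) ≤ m ((α^[k]) ⁻¹' t) := measure_mono (Set.preimage_mono hst)
    _ ≤ (C : ℝ≥0∞) ^ k * m t := preimage_iterate_le hαm hC k htm
    _ = 0 := by rw [ht0, mul_zero]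

lemma ae_comp_iterate (k : ℕ) {f g : X → ℝ} (h : f =ᵐ[m] g) :
    (fun x => f (α^[k] x)) =ᵐ[m] fun x => g (α^[k] x) := by
  have h0 : m {x | ¬ f x = g x} = 0 := h
  have : {x | ¬ f (α^[k] x) = g (α^[k] x)} = (α^[k]) ⁻¹' {x | ¬ f x = g x} := rfl
  exact (ae_iff).2 (by rw [this]; exact null_preimage_iterate hαm hC k h0)

end shift

section mu

variable {m : Measure X}

lemma memtop_const (c : ℝ) : MemLp (fun _ : X => c) ⊤ m :=
  memLp_top_of_bound aestronglyMeasurable_const |c| (ae_of_all _ fun _ => le_refl _)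

lemma mu_zero (μ : PosFunctional m) : μ.toFun (fun _ => 0) = 0 := by
  have h := μ.map_smul' 0 (fun _ => 1) (memtop_const 1)
  have h2 : (0 : ℝ) • (fun _ : X => (1:ℝ)) = fun _ : X => (0:ℝ) := by
    funext x; simp
  rw [h2] at h
  simpa using h

lemma mu_sum (μ : PosFunctional m) {ι : Type*} (s : Finset ι) (F : ι → X → ℝ)
    (h : ∀ i ∈ s, MemLp (F i) ⊤ m) :
    μ.toFun (∑ i ∈ s, F i) = ∑ i ∈ s, μ.toFun (F i) := by
  induction s using Finset.cons_induction with
  | empty =>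
      simp only [Finset.sum_empty]
      have : (0 : X → ℝ) = fun _ : X => (0:ℝ) := rfl
      rw [this, mu_zero]
  | cons a s ha ih =>
      rw [Finset.sum_cons, Finset.sum_cons,
        μ.map_add' _ _ (h a (Finset.mem_cons_self a s))
          (memLp_finset_sum' s fun i hi => h i (Finset.mem_cons_of_mem hi)),
        ih fun i hi => h i (Finset.mem_cons_of_mem hi)]

lemma mu_mono (μ : PosFunctional m) {f g : X → ℝ} (hf : MemLp f ⊤ m)
    (hg : MemLp g ⊤ m) (h : f ≤ᵐ[m] g) : μ.toFun f ≤ μ.toFun g := by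
  have hsub : MemLp (g - f) ⊤ m := hg.sub hf
  have hadd : μ.toFun (f + (g - f)) = μ.toFun f + μ.toFun (g - f) :=
    μ.map_add' f (g - f) hf hsub
  have h1 : f + (g - f) = g := by funext x; simp
  rw [h1] at hadd
  have h2 : 0 ≤ μ.toFun (g - f) := by
    refine μ.nonneg' _ hsub ?_
    filter_upwards [h] with x hx
    simpa [Pi.sub_apply] using hx
  linarith

end mu

lemma comp_package {m : Measure X} {α : X → X} (hαm : Measurable α) {C : ℝ≥0}
    (hC : ∀ s : Set X, MeasurableSet s → m (α ⁻¹' s) ≤ (C : ℝ≥0∞) * m s)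
    (n : ℕ) (u : X → ℝ) (hu : u ∈ UnitL1 m) :
    ∃ u' : X → ℝ, Measurable u' ∧ u =ᵐ[m] u' ∧
      Integrable (fun x => |u' (α^[n] x)|) m ∧
      ∫ x, |u' (α^[n] x)| ∂m ≤ (C : ℝ) ^ n := by
  have huint : Integrable u m := hu.1
  set u' : X → ℝ := huint.aestronglyMeasurable.mk u with hu'def
  have hu'meas : Measurable u' := huint.aestronglyMeasurable.measurable_mk
  have hae : u =ᵐ[m] u' := huint.aestronglyMeasurable.ae_eq_mk
  have hu'int : Integrable u' m := huint.congr hae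
  have habs : Integrable (fun x => |u' x|) m := hu'int.abs
  have hint1 : ∫ x, |u' x| ∂m = 1 := by
    rw [← hu.2]
    exact integral_congr_ae (by filter_upwards [hae] with x hx; rw [hx])
  have hlint : ∫⁻ x, ENNReal.ofReal |u' x| ∂m = 1 := by
    rw [← ofReal_integral_eq_lintegral_ofReal habs (ae_of_all _ fun x => abs_nonneg _),
      hint1, ENNReal.ofReal_one]
  have hmeas2 : Measurable (fun x => ENNReal.ofReal |u' x|) :=
    hu'meas.abs.ennreal_ofReal
  have hcomp : ∫⁻ x, ENNReal.ofReal |u' (α^[n] x)| ∂m ≤ (C : ℝ≥0∞) ^ n := by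
    calc ∫⁻ x, ENNReal.ofReal |u' (α^[n] x)| ∂m
        ≤ (C : ℝ≥0∞) ^ n * ∫⁻ x, ENNReal.ofReal |u' x| ∂m :=
          lintegral_comp_iterate_le hαm hC n hmeas2
      _ = (C : ℝ≥0∞) ^ n := by rw [hlint, mul_one]
  have hCnetop : ((C : ℝ≥0∞) ^ n) ≠ ⊤ := by
    exact (ENNReal.pow_lt_top ENNReal.coe_lt_top).ne
  have hASM : AEStronglyMeasurable (fun x => |u' (α^[n] x)|) m :=
    ((hu'meas.comp (hαm.iterate n)).abs).aestronglyMeasurable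
  have hIcomp : Integrable (fun x => |u' (α^[n] x)|) m := by
    refine ⟨hASM, ?_⟩
    rw [hasFiniteIntegral_iff_ofReal (ae_of_all _ fun x => abs_nonneg _)]
    exact lt_of_le_of_lt hcomp (ENNReal.pow_lt_top ENNReal.coe_lt_top)
  refine ⟨u', hu'meas, hae, hIcomp, ?_⟩
  rw [integral_eq_lintegral_of_nonneg_ae (ae_of_all _ fun x => abs_nonneg _) hASM]
  calc (∫⁻ x, ENNReal.ofReal |u' (α^[n] x)| ∂m).toReal
      ≤ ((C : ℝ≥0∞) ^ n).toReal := ENNReal.toReal_mono hCnetop hcomp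
    _ = (C : ℝ) ^ n := by rw [ENNReal.toReal_pow, ENNReal.coe_toReal]

lemma key_bound (m : Measure X) (α : X → X) (hαm : Measurable α) (C : ℝ≥0)
    (hC : ∀ s : Set X, MeasurableSet s → m (α ⁻¹' s) ≤ (C : ℝ≥0∞) * m s)
    (φ : X → ℝ) (hφ : MemLp φ ⊤ m) (μ : PosFunctional m) (hμ : μ.Invariant α)
    (n : ℕ) :
    tauN m α μ n ≤
      ((Real.log (weightedOpNorm m α φ n) - n * μ.toFun φ + 1 : ℝ) : EReal) := by
  classical
  -- bound for φ
  set B : ℝ := (eLpNorm φ ⊤ m).toReal with hBdef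
  have hB0 : 0 ≤ B := ENNReal.toReal_nonneg
  have hφae : ∀ᵐ x ∂m, |φ x| ≤ B := by
    have hlt : eLpNormEssSup φ m < ⊤ := by
      have h2 := hφ.2; rwa [eLpNorm_exponent_top] at h2
    filter_upwards [ae_le_eLpNormEssSup (f := φ) (μ := m)] with x hx
    have h3 := ENNReal.toReal_mono hlt.ne hx
    simpa [hBdef, eLpNorm_exponent_top, Real.norm_eq_abs] using h3
  set φ₀ : X → ℝ := hφ.1.mk φ with hφ₀def
  have hφ₀meas : Measurable φ₀ := hφ.1.measurable_mk
  set φ'' : X → ℝ := fun x => max (min (φ₀ x) B) (-B) with hφ''def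
  have hφ''meas : Measurable φ'' := (hφ₀meas.min measurable_const).max measurable_const
  have hφ''bd : ∀ x, |φ'' x| ≤ B := fun x =>
    abs_le.2 ⟨le_max_right _ _, max_le (min_le_right _ _) (neg_le_self hB0)⟩
  have hφφ'' : φ =ᵐ[m] φ'' := by
    filter_upwards [hφ.1.ae_eq_mk, hφae] with x h1 h2
    have h1' : φ x = φ₀ x := h1
    rw [hφ''def]
    simp only
    rw [← h1', min_eq_left (abs_le.1 h2).2, max_eq_left (abs_le.1 h2).1]
  have hφ''mem : MemLp φ'' ⊤ m :=
    memLp_top_of_bound hφ''meas.aestronglyMeasurable B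
      (ae_of_all _ fun x => by simpa [Real.norm_eq_abs] using hφ''bd x)
  -- Birkhoff sums
  set ψ : X → ℝ := birkhoff α φ'' n with hψdef
  have hψmeas : Measurable ψ := by
    show Measurable fun x => ∑ i ∈ Finset.range n, φ'' (α^[i] x)
    exact Finset.measurable_sum _ fun i _ => hφ''meas.comp (hαm.iterate i)
  have hψbd : ∀ x, |ψ x| ≤ n * B := by
    intro x
    calc |ψ x| ≤ ∑ i ∈ Finset.range n, |φ'' (α^[i] x)| := Finset.abs_sum_le_sum_abs _ _
      _ ≤ ∑ _i ∈ Finset.range n, B := Finset.sum_le_sum fun i _ => hφ''bd _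
      _ = n * B := by simp [Finset.sum_const, nsmul_eq_mul]
  have hψae : birkhoff α φ n =ᵐ[m] ψ := by
    have hall : ∀ᵐ x ∂m, ∀ i ∈ Finset.range n, φ (α^[i] x) = φ'' (α^[i] x) := by
      rw [eventually_all_finset]
      exact fun i _ => ae_comp_iterate hαm hC i hφφ''
    filter_upwards [hall] with x hx
    exact Finset.sum_congr rfl hx
  have hψMem : MemLp ψ ⊤ m :=
    memLp_top_of_bound hψmeas.aestronglyMeasurable (n * B)
      (ae_of_all _ fun x => by simpa [Real.norm_eq_abs] using hψbd x)
  -- the partition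
  set J : ℕ := ⌈n * B⌉₊ with hJdef
  have hJge : (n * B : ℝ) ≤ J := Nat.le_ceil _
  set E : ℤ → Set X := fun j => ψ ⁻¹' (Set.Ico (j : ℝ) ((j : ℝ) + 1)) with hEdef
  have hEmeas : ∀ j, MeasurableSet (E j) := fun j => hψmeas measurableSet_Ico
  have hEmem : ∀ (x : X) (j : ℤ), x ∈ E j ↔ ⌊ψ x⌋ = j := by
    intro x j
    rw [hEdef]
    simp only [Set.mem_preimage, Set.mem_Ico]
    rw [Int.floor_eq_iff]
  set s0 : Finset ℤ := Finset.Icc (-(J : ℤ)) (J : ℤ) with hs0def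
  have hfloor : ∀ x, ⌊ψ x⌋ ∈ s0 := by
    intro x
    rw [hs0def, Finset.mem_Icc]
    have h1 := (abs_le.1 (hψbd x)).1
    have h2 := (abs_le.1 (hψbd x)).2
    constructor
    · rw [Int.le_floor]; push_cast; linarith
    · have h3 : (⌊ψ x⌋ : ℝ) ≤ (J : ℝ) := le_trans (Int.floor_le _) (by linarith)
      exact_mod_cast h3
  set g : ℤ → X → ℝ := fun j => (E j).indicator (fun _ => 1) with hgdef
  have hgmem1 : ∀ (x : X) (j : ℤ), x ∈ E j → g j x = 1 := fun x j hx => by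
    rw [hgdef]; simp [Set.indicator_apply, hx]
  have hgmem0 : ∀ (x : X) (j : ℤ), x ∉ E j → g j x = 0 := fun x j hx => by
    rw [hgdef]; simp [Set.indicator_apply, hx]
  have hgnn : ∀ (j : ℤ) (x : X), 0 ≤ g j x := fun j x => by
    rw [hgdef]; exact Set.indicator_nonneg (fun _ _ => zero_le_one) x
  set s : Finset ℤ := s0.filter (fun j => (E j).Nonempty) with hsdef
  have hginj : ∀ j ∈ s, ∀ j' ∈ s, g j = g j' → j = j' := by
    intro j hj j' hj' hgg
    rw [hsdef, Finset.mem_filter] at hj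
    obtain ⟨x, hx⟩ := hj.2
    have h1 : g j x = 1 := hgmem1 x j hx
    have h2 : g j' x = 1 := by rw [← hgg]; exact h1
    have hx' : x ∈ E j' := by
      by_contra hcon
      rw [hgmem0 x j' hcon] at h2
      norm_num at h2
    rw [← (hEmem x j).1 hx, ← (hEmem x j').1 hx']
  have hsum1 : ∀ x, ∑ j ∈ s, g j x = 1 := by
    intro x
    have h0 : ∑ j ∈ s, g j x = ∑ j ∈ s0, g j x := by
      rw [hsdef]
      refine Finset.sum_filter_of_ne fun j hj hne => ?_
      by_contra hcon
      exact hne (hgmem0 x j (fun hx => hcon ⟨x, hx⟩))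
    rw [h0]
    rw [Finset.sum_eq_single_of_mem ⌊ψ x⌋ (hfloor x)]
    · exact hgmem1 x _ ((hEmem x _).2 rfl)
    · intro j _ hne
      exact hgmem0 x j fun hx => hne ((hEmem x j).1 hx).symm
  set D : Finset (X → ℝ) := s.image g with hDdef
  have hgMem : ∀ j, MemLp (g j) ⊤ m := fun j =>
    memLp_top_of_bound ((measurable_const.indicator (hEmeas j)).aestronglyMeasurable) 1
      (ae_of_all _ fun x => by
        rw [hgdef]
        by_cases hx : x ∈ E j <;> simp [Set.indicator_apply, hx])
  have hPart : IsPartUnity m D := by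
    constructor
    · intro g' hg'
      obtain ⟨j, hj, rfl⟩ := Finset.mem_image.1 hg'
      exact ⟨hgMem j, ae_of_all _ fun x => hgnn j x⟩
    · refine ae_of_all _ fun x => ?_
      rw [hDdef, Finset.sum_image hginj]
      exact hsum1 x
  -- weights
  set w : ℤ → ℝ := fun j => μ.toFun (g j) with hwdef
  have hwnn : ∀ j, 0 ≤ w j := fun j =>
    μ.nonneg' _ (hgMem j) (ae_of_all _ fun x => hgnn j x)
  have hwsum : ∑ j ∈ s, w j = 1 := by
    have hgs : (∑ j ∈ s, g j) = fun _ : X => (1 : ℝ) := by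
      funext x
      rw [Finset.sum_apply]
      exact hsum1 x
    rw [hwdef]
    simp only
    rw [← mu_sum μ s g fun j _ => hgMem j, hgs, μ.map_one']
  -- the mu-side estimate
  have hcomp_mem : ∀ i : ℕ, MemLp (fun x => φ'' (α^[i] x)) ⊤ m := fun i =>
    memLp_top_of_bound ((hφ''meas.comp (hαm.iterate i)).aestronglyMeasurable) B
      (ae_of_all _ fun x => by simpa [Real.norm_eq_abs] using hφ''bd (α^[i] x))
  have hμψ : μ.toFun ψ = n * μ.toFun φ := by
    have hiter : ∀ i : ℕ, μ.toFun (fun x => φ'' (α^[i] x)) = μ.toFun φ'' := by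
      intro i
      induction i with
      | zero => exact congrArg μ.toFun (funext fun x => by rw [Function.iterate_zero_apply])
      | succ i ih =>
          have hcc : (fun x => φ'' (α^[i+1] x)) = (fun x => φ'' (α^[i] x)) ∘ α := by
            funext x
            rw [Function.comp_apply, Function.iterate_succ_apply]
          rw [hcc, hμ _ (hcomp_mem i), ih]
    have hψeq : ψ = ∑ i ∈ Finset.range n, (fun x => φ'' (α^[i] x)) := by
      funext x
      rw [Finset.sum_apply]
      rfl
    rw [hψeq, mu_sum μ _ _ fun i _ => hcomp_mem i]
    have hμφ'' : μ.toFun φ'' = μ.toFun φ := μ.congr_ae' φ'' φ hφ''mem hφ hφφ''.symm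
    rw [Finset.sum_congr rfl fun i _ => (hiter i).trans hμφ'']
    rw [Finset.sum_const, Finset.card_range, nsmul_eq_mul]
  have hgψmem : ∀ j, MemLp (fun x => g j x * ψ x) ⊤ m := by
    intro j
    refine memLp_top_of_bound
      ((measurable_const.indicator (hEmeas j)).mul hψmeas).aestronglyMeasurable (n * B)
      (ae_of_all _ fun x => ?_)
    rw [Real.norm_eq_abs]
    by_cases hx : x ∈ E j
    · rw [hgmem1 x j hx, one_mul]
      exact hψbd x
    · rw [hgmem0 x j hx, zero_mul, abs_zero]
      have := hψbd x
      have := abs_nonneg (ψ x)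
      linarith
  have hμψle : (n : ℝ) * μ.toFun φ ≤ (∑ j ∈ s, (j : ℝ) * w j) + 1 := by
    have hsplit : μ.toFun ψ = ∑ j ∈ s, μ.toFun (fun x => g j x * ψ x) := by
      have hψs : ψ = ∑ j ∈ s, (fun x => g j x * ψ x) := by
        funext x
        rw [Finset.sum_apply, ← Finset.sum_mul, hsum1, one_mul]
      calc μ.toFun ψ = μ.toFun (∑ j ∈ s, fun x => g j x * ψ x) := by rw [← hψs]
        _ = ∑ j ∈ s, μ.toFun (fun x => g j x * ψ x) := mu_sum μ _ _ fun j _ => hgψmem j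
    have hterm : ∀ j ∈ s, μ.toFun (fun x => g j x * ψ x) ≤ ((j : ℝ) + 1) * w j := by
      intro j hj
      have hpt : ∀ x, g j x * ψ x ≤ ((j : ℝ) + 1) * g j x := by
        intro x
        by_cases hx : x ∈ E j
        · rw [hgmem1 x j hx, one_mul, mul_one]
          have hx2 : ψ x < (j : ℝ) + 1 := by
            have := hx
            rw [hEdef] at this
            exact this.2
          linarith
        · rw [hgmem0 x j hx, zero_mul, mul_zero]
      have hsm : (fun x => ((j : ℝ) + 1) * g j x) = ((j : ℝ) + 1) • g j := by
        funext x
        simp [smul_eq_mul]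
      calc μ.toFun (fun x => g j x * ψ x)
          ≤ μ.toFun (((j : ℝ) + 1) • g j) := by
            refine mu_mono μ (hgψmem j) ((hgMem j).const_smul _) (ae_of_all _ fun x => ?_)
            simpa [smul_eq_mul] using hpt x
        _ = ((j : ℝ) + 1) * w j := μ.map_smul' _ _ (hgMem j)
    calc (n : ℝ) * μ.toFun φ = μ.toFun ψ := hμψ.symm
      _ = ∑ j ∈ s, μ.toFun (fun x => g j x * ψ x) := hsplit
      _ ≤ ∑ j ∈ s, ((j : ℝ) + 1) * w j := Finset.sum_le_sum hterm
      _ = (∑ j ∈ s, (j : ℝ) * w j) + ∑ j ∈ s, w j := by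
          rw [← Finset.sum_add_distrib]
          exact Finset.sum_congr rfl fun j _ => by ring
      _ = (∑ j ∈ s, (j : ℝ) * w j) + 1 := by rw [hwsum]
  -- the integral-side package
  set W : ℝ := weightedOpNorm m α φ n with hWdef
  have hbd : ∀ u ∈ UnitL1 m, ∀ u' : X → ℝ, Measurable u' → u =ᵐ[m] u' →
      Integrable (fun x => |u' (α^[n] x)|) m → (∫ x, |u' (α^[n] x)| ∂m ≤ (C : ℝ) ^ n) →
      ((∫ x, Real.exp (birkhoff α φ n x) * |u (α^[n] x)| ∂m
        = ∫ x, Real.exp (ψ x) * |u' (α^[n] x)| ∂m)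
      ∧ Integrable (fun x => Real.exp (ψ x) * |u' (α^[n] x)|) m
      ∧ ∫ x, Real.exp (ψ x) * |u' (α^[n] x)| ∂m ≤ Real.exp (n * B) * (C : ℝ) ^ n) := by
    intro u hu u' hu'meas hae hint hle
    have heq : ∫ x, Real.exp (birkhoff α φ n x) * |u (α^[n] x)| ∂m
        = ∫ x, Real.exp (ψ x) * |u' (α^[n] x)| ∂m := by
      refine integral_congr_ae ?_
      filter_upwards [hψae, ae_comp_iterate hαm hC n hae] with x h1 h2
      rw [h1, h2]
    have hintexp : Integrable (fun x => Real.exp (ψ x) * |u' (α^[n] x)|) m := by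
      refine hint.bdd_mul ((Real.measurable_exp.comp hψmeas).aestronglyMeasurable)
        (c := Real.exp (n * B)) (ae_of_all _ fun x => ?_)
      rw [Real.norm_eq_abs, Real.abs_exp]
      exact Real.exp_le_exp.2 ((le_abs_self _).trans (hψbd x))
    refine ⟨heq, hintexp, ?_⟩
    calc ∫ x, Real.exp (ψ x) * |u' (α^[n] x)| ∂m
        ≤ ∫ x, Real.exp (n * B) * |u' (α^[n] x)| ∂m := by
          refine integral_mono_of_nonneg
            (ae_of_all _ fun x => mul_nonneg (Real.exp_nonneg _) (abs_nonneg _))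
            (hint.const_mul _) (ae_of_all _ fun x => ?_)
          exact mul_le_mul_of_nonneg_right
            (Real.exp_le_exp.2 ((le_abs_self _).trans (hψbd x))) (abs_nonneg _)
      _ = Real.exp (n * B) * ∫ x, |u' (α^[n] x)| ∂m := integral_const_mul _ _
      _ ≤ Real.exp (n * B) * (C : ℝ) ^ n :=
          mul_le_mul_of_nonneg_left hle (Real.exp_nonneg _)
  have hWbdd : BddAbove {r : ℝ | ∃ f ∈ UnitL1 m,
      r = ∫ x, Real.exp (birkhoff α φ n x) * |f (α^[n] x)| ∂m} := by
    refine ⟨Real.exp (n * B) * (C : ℝ) ^ n, fun r hr => ?_⟩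
    obtain ⟨u, hu, rfl⟩ := hr
    obtain ⟨u', hm', hae, hint, hle⟩ := comp_package hαm hC n u hu
    obtain ⟨heq, _, hle2⟩ := hbd u hu u' hm' hae hint hle
    rw [heq]; exact hle2
  -- main inequality for each f on the unit sphere
  have hkey : ∀ f ∈ UnitL1 m,
      ∑ j ∈ s, tauTermR m α n (w j) f (g j) ≤
        ((Real.log W - n * μ.toFun φ + 1 : ℝ) : EReal) := by
    intro f hf
    obtain ⟨f', hf'meas, hfae, hfint, hfle⟩ := comp_package hαm hC n f hf
    obtain ⟨hfeq, hfintexp, _⟩ := hbd f hf f' hf'meas hfae hfint hfle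
    set I : ℤ → ℝ := fun j => wInt m α n (g j) f with hIdef
    have hIalt : ∀ j, I j = ∫ x, g j x * |f' (α^[n] x)| ∂m := by
      intro j
      refine integral_congr_ae ?_
      filter_upwards [ae_comp_iterate hαm hC n hfae] with x hx
      show g j x * |f (α^[n] x)| = g j x * |f' (α^[n] x)|
      rw [hx]
    have hInn : ∀ j, 0 ≤ I j := fun j =>
      integral_nonneg fun x => mul_nonneg (hgnn j x) (abs_nonneg _)
    have hIg : ∀ j, Integrable (fun x => g j x * |f' (α^[n] x)|) m := by
      intro j
      refine hfint.bdd_mul ((measurable_const.indicator (hEmeas j))).aestronglyMeasurable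
        (c := 1) (ae_of_all _ fun x => ?_)
      rw [Real.norm_eq_abs]
      by_cases hx : x ∈ E j
      · rw [hgmem1 x j hx]; norm_num
      · rw [hgmem0 x j hx]; norm_num
    have hpt2 : ∀ x, ∑ j ∈ s, Real.exp (j : ℝ) * g j x ≤ Real.exp (ψ x) := by
      intro x
      have h0 : ∑ j ∈ s, Real.exp (j : ℝ) * g j x
          = ∑ j ∈ s0, Real.exp (j : ℝ) * g j x := by
        rw [hsdef]
        refine Finset.sum_filter_of_ne fun j hj hne => ?_
        by_contra hcon
        refine hne ?_
        rw [hgmem0 x j (fun hx => hcon ⟨x, hx⟩), mul_zero]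
      rw [h0, Finset.sum_eq_single_of_mem ⌊ψ x⌋ (hfloor x)]
      · rw [hgmem1 x _ ((hEmem x _).2 rfl), mul_one]
        exact Real.exp_le_exp.2 (Int.floor_le _)
      · intro j _ hne
        rw [hgmem0 x j fun hx => hne ((hEmem x j).1 hx).symm, mul_zero]
    have hAsum : ∑ j ∈ s, Real.exp (j : ℝ) * I j ≤ W := by
      have h1 : ∀ j ∈ s, Real.exp (j : ℝ) * I j
          = ∫ x, Real.exp (j : ℝ) * (g j x * |f' (α^[n] x)|) ∂m := by
        intro j _
        rw [hIalt j, ← integral_const_mul]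
      rw [Finset.sum_congr rfl h1, ← integral_finset_sum _ (fun j _ => (hIg j).const_mul _)]
      have h2 : ∫ x, ∑ j ∈ s, Real.exp (j : ℝ) * (g j x * |f' (α^[n] x)|) ∂m
          ≤ ∫ x, Real.exp (ψ x) * |f' (α^[n] x)| ∂m := by
        refine integral_mono_of_nonneg
          (ae_of_all _ fun x => Finset.sum_nonneg fun j _ =>
            mul_nonneg (Real.exp_nonneg _) (mul_nonneg (hgnn j x) (abs_nonneg _)))
          hfintexp (ae_of_all _ fun x => ?_)
        have h3 : ∑ j ∈ s, Real.exp (j : ℝ) * (g j x * |f' (α^[n] x)|)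
            = (∑ j ∈ s, Real.exp (j : ℝ) * g j x) * |f' (α^[n] x)| := by
          rw [Finset.sum_mul]
          exact Finset.sum_congr rfl fun j _ => by ring
        show ∑ j ∈ s, Real.exp (j : ℝ) * (g j x * |f' (α^[n] x)|)
            ≤ Real.exp (ψ x) * |f' (α^[n] x)|
        rw [h3]
        exact mul_le_mul_of_nonneg_right (hpt2 x) (abs_nonneg _)
      refine le_trans h2 ?_
      rw [← hfeq]
      exact le_csSup hWbdd ⟨f, hf, rfl⟩
    by_cases hbad : ∃ j ∈ s, ¬ w j = 0 ∧ wInt m α n (g j) f = 0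
    · obtain ⟨j0, hj0, hw0, hI0⟩ := hbad
      have hbot : tauTermR m α n (w j0) f (g j0) = ⊥ := by
        rw [tauTermR, if_neg hw0, if_pos hI0]
      rw [← Finset.add_sum_erase s _ hj0, hbot, EReal.bot_add]
      exact bot_le
    · push_neg at hbad
      have hterm2 : ∀ j ∈ s, tauTermR m α n (w j) f (g j)
          = (((if w j = 0 then 0 else w j * Real.log (I j / w j)) : ℝ) : EReal) := by
        intro j hj
        rw [tauTermR]
        by_cases hw : w j = 0
        · rw [if_pos hw, if_pos hw, EReal.coe_zero]
        · rw [if_neg hw, if_neg (hbad j hj hw), if_neg hw]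
      rw [Finset.sum_congr rfl hterm2, ← ecoe_sum, EReal.coe_le_coe_iff]
      -- the real inequality
      set z : ℤ → ℝ := fun j => if w j = 0 then 1 else Real.exp (j : ℝ) * I j / w j
        with hzdef
      have hzpos : ∀ j ∈ s, 0 < z j := by
        intro j hj
        rw [hzdef]
        simp only
        by_cases hw : w j = 0
        · rw [if_pos hw]; norm_num
        · rw [if_neg hw]
          have hI : 0 < I j := lt_of_le_of_ne (hInn j) (Ne.symm (hbad j hj hw))
          have hwp : 0 < w j := lt_of_le_of_ne (hwnn j) (Ne.symm hw)
          positivity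
      have hamgm := Real.geom_mean_le_arith_mean_weighted s w z
        (fun j _ => hwnn j) hwsum (fun j hj => (hzpos j hj).le)
      have hwz_le : ∑ j ∈ s, w j * z j ≤ ∑ j ∈ s, Real.exp (j : ℝ) * I j := by
        refine Finset.sum_le_sum fun j hj => ?_
        by_cases hw : w j = 0
        · rw [hw, zero_mul]
          exact mul_nonneg (Real.exp_nonneg _) (hInn j)
        · rw [hzdef]
          simp only
          rw [if_neg hw, mul_div_cancel₀ _ hw]
      have hprodpos : 0 < ∏ j ∈ s, z j ^ w j :=
        Finset.prod_pos fun j hj => Real.rpow_pos_of_pos (hzpos j hj) _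
      have hlogprod : Real.log (∏ j ∈ s, z j ^ w j) = ∑ j ∈ s, w j * Real.log (z j) := by
        rw [Real.log_prod fun j hj => (Real.rpow_pos_of_pos (hzpos j hj) _).ne']
        exact Finset.sum_congr rfl fun j hj => Real.log_rpow (hzpos j hj) _
      have hkey2 : ∑ j ∈ s, w j * Real.log (z j) ≤ Real.log W := by
        rw [← hlogprod]
        exact Real.log_le_log hprodpos (le_trans hamgm (le_trans hwz_le hAsum))
      have ht_eq : ∀ j ∈ s, (if w j = 0 then (0:ℝ) else w j * Real.log (I j / w j))
          = w j * Real.log (z j) - (j : ℝ) * w j := by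
        intro j hj
        by_cases hw : w j = 0
        · rw [if_pos hw, hw]; ring
        · rw [if_neg hw, hzdef]
          simp only
          rw [if_neg hw]
          have hI : I j ≠ 0 := hbad j hj hw
          have hlg : Real.log (Real.exp (j : ℝ) * I j / w j)
              = (j : ℝ) + Real.log (I j / w j) := by
            rw [mul_div_assoc, Real.log_mul (Real.exp_ne_zero _) (div_ne_zero hI hw),
              Real.log_exp]
          rw [hlg]
          ring
      calc ∑ j ∈ s, (if w j = 0 then (0:ℝ) else w j * Real.log (I j / w j))
          = (∑ j ∈ s, w j * Real.log (z j)) - ∑ j ∈ s, (j : ℝ) * w j := by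
            rw [Finset.sum_congr rfl ht_eq, Finset.sum_sub_distrib]
        _ ≤ Real.log W - (n * μ.toFun φ - 1) := by
            have := hμψle
            have := hkey2
            linarith
        _ = Real.log W - n * μ.toFun φ + 1 := by ring
  -- conclude
  have hstep1 : tauN m α μ n ≤ tauND m α μ n D := by
    simp only [tauN]
    exact iInf₂_le D hPart
  refine le_trans hstep1 ?_
  simp only [tauND, tauNDW]
  split_ifs with hcond
  · exact bot_le
  · refine iSup₂_le fun f hf => ?_
    rw [Finset.sum_image hginj]
    exact hkey f hf


end Helpers

/-- For every `φ ∈ L^∞(X,m)` and every `α`-invariant `μ ∈ M_α(X,m)` one has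
`λ(φ) ≥ μ(φ) + τ(μ)`. -/
theorem lambda_ge_mu_add_tEntropy
    (m : Measure X) [SigmaFinite m] (α : X → X) (hα : ShiftBounded m α)
    (φ : X → ℝ) (hφ : MemLp φ ⊤ m) (lam : ℝ)
    (hlam : Tendsto (fun n : ℕ => Real.log (weightedOpNorm m α φ n) / n) atTop (𝓝 lam))
    (μ : PosFunctional m) (hμ : μ.Invariant α) :
    (μ.toFun φ : EReal) + tEntropy m α μ ≤ (lam : EReal) := by
  obtain ⟨hαm, C, hC⟩ := hα
  have hmain : ∀ n : ℕ, 0 < n →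
      (μ.toFun φ : EReal) + tEntropy m α μ ≤
        ((Real.log (weightedOpNorm m α φ n) / n + 1 / n : ℝ) : EReal) := by
    intro n hn
    have hn0 : (n : ℝ) ≠ 0 := Nat.cast_ne_zero.2 hn.ne'
    have h1 : tEntropy m α μ ≤
        ((((n : ℝ)⁻¹ : ℝ)) : EReal) * tauN m α μ n := by
      simp only [tEntropy]
      exact iInf_le _ (⟨n, hn⟩ : {k : ℕ // 0 < k})
    have h2 : ((((n : ℝ)⁻¹ : ℝ)) : EReal) * tauN m α μ n ≤
        ((((n : ℝ)⁻¹ : ℝ)) : EReal) *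
          ((Real.log (weightedOpNorm m α φ n) - n * μ.toFun φ + 1 : ℝ) : EReal) :=
      mul_le_mul_of_nonneg_left (key_bound m α hαm C hC φ hφ μ hμ n)
        (EReal.coe_nonneg.2 (inv_nonneg.2 (Nat.cast_nonneg n)))
    have h3 : ((((n : ℝ)⁻¹ : ℝ)) : EReal) *
          ((Real.log (weightedOpNorm m α φ n) - n * μ.toFun φ + 1 : ℝ) : EReal)
        = (((n : ℝ)⁻¹ * (Real.log (weightedOpNorm m α φ n) - n * μ.toFun φ + 1) : ℝ)
            : EReal) := by
      rw [EReal.coe_mul]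
    have h4 : tEntropy m α μ ≤
        (((n : ℝ)⁻¹ * (Real.log (weightedOpNorm m α φ n) - n * μ.toFun φ + 1) : ℝ)
          : EReal) := le_trans h1 (le_trans h2 (le_of_eq h3))
    have h5 : (μ.toFun φ : EReal) + tEntropy m α μ ≤
        (μ.toFun φ : EReal) +
          (((n : ℝ)⁻¹ * (Real.log (weightedOpNorm m α φ n) - n * μ.toFun φ + 1) : ℝ)
            : EReal) := add_le_add_right h4 _
    refine le_trans h5 (le_of_eq ?_)
    rw [← EReal.coe_add]
    congr 1
    field_simp
    ring
  have htend : Tendsto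
      (fun n : ℕ => ((Real.log (weightedOpNorm m α φ n) / n + 1 / n : ℝ) : EReal))
      atTop (𝓝 ((lam : ℝ) : EReal)) := by
    rw [EReal.tendsto_coe]
    have := hlam.add tendsto_one_div_atTop_nhds_zero_nat
    simpa using this
  refine ge_of_tendsto htend ?_
  filter_upwards [eventually_ge_atTop 1] with n hn
  exact hmain n hn
end TEntropyPaper
end
end

section
/- The function φ ↦ λ(φ), the logarithm of the spectral radius of the weighted shift operator A_φ, is convex on L^∞(X,m). -/
open MeasureTheory Filter Topology
open scoped Classical ENNReal NNReal

noncomputable section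

namespace TEntropyPaper

variable {X : Type*} [MeasurableSpace X]

section AuxConvex

variable {m : Measure X} {α : X → X} {C : ℝ≥0}

lemma preimage_iter_le (hmeas : Measurable α)
    (hC : ∀ s : Set X, MeasurableSet s → m (α ⁻¹' s) ≤ (C : ℝ≥0∞) * m s)
    (n : ℕ) : ∀ s : Set X, MeasurableSet s → m (α^[n] ⁻¹' s) ≤ (C : ℝ≥0∞) ^ n * m s := by
  induction n with
  | zero => intro s _; simp
  | succ n ih =>
    intro s hs
    have h1 : α^[n+1] ⁻¹' s = α^[n] ⁻¹' (α ⁻¹' s) := by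
      rw [Function.iterate_succ']; rfl
    rw [h1]
    calc m (α^[n] ⁻¹' (α ⁻¹' s)) ≤ (C : ℝ≥0∞) ^ n * m (α ⁻¹' s) := ih _ (hmeas hs)
      _ ≤ (C : ℝ≥0∞) ^ n * ((C : ℝ≥0∞) * m s) := mul_le_mul_right (hC s hs) _
      _ = (C : ℝ≥0∞) ^ (n+1) * m s := by ring

lemma null_preimage_iter (hmeas : Measurable α)
    (hC : ∀ s : Set X, MeasurableSet s → m (α ⁻¹' s) ≤ (C : ℝ≥0∞) * m s)
    (n : ℕ) {s : Set X} (hs : m s = 0) : m (α^[n] ⁻¹' s) = 0 := by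
  have h1 : m (α^[n] ⁻¹' (toMeasurable m s)) ≤ (C : ℝ≥0∞) ^ n * m (toMeasurable m s) :=
    preimage_iter_le hmeas hC n _ (measurableSet_toMeasurable m s)
  rw [measure_toMeasurable, hs, mul_zero] at h1
  exact le_antisymm (le_trans (measure_mono (Set.preimage_mono (subset_toMeasurable m s))) h1)
    zero_le

lemma ae_comp_iter (hmeas : Measurable α)
    (hC : ∀ s : Set X, MeasurableSet s → m (α ⁻¹' s) ≤ (C : ℝ≥0∞) * m s)
    {P : X → Prop} (hP : ∀ᵐ x ∂m, P x) (n : ℕ) : ∀ᵐ x ∂m, P (α^[n] x) := by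
  rw [ae_iff] at hP ⊢
  exact null_preimage_iter hmeas hC n hP

lemma map_iter_ac (hmeas : Measurable α)
    (hC : ∀ s : Set X, MeasurableSet s → m (α ⁻¹' s) ≤ (C : ℝ≥0∞) * m s)
    (n : ℕ) : m.map (α^[n]) ≪ m := by
  refine Measure.AbsolutelyContinuous.mk (fun s hs h0 => ?_)
  rw [Measure.map_apply (hmeas.iterate n) hs]
  exact null_preimage_iter hmeas hC n h0

lemma aesm_comp_iter (hmeas : Measurable α)
    (hC : ∀ s : Set X, MeasurableSet s → m (α ⁻¹' s) ≤ (C : ℝ≥0∞) * m s)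
    (n : ℕ) {f : X → ℝ} (hf : AEStronglyMeasurable f m) :
    AEStronglyMeasurable (fun x => f (α^[n] x)) m :=
  (hf.mono_ac (map_iter_ac hmeas hC n)).comp_aemeasurable (hmeas.iterate n).aemeasurable

lemma lintegral_comp_iter_le (hmeas : Measurable α)
    (hC : ∀ s : Set X, MeasurableSet s → m (α ⁻¹' s) ≤ (C : ℝ≥0∞) * m s)
    (n : ℕ) {g : X → ℝ≥0∞} (hg : AEMeasurable g m) :
    ∫⁻ x, g (α^[n] x) ∂m ≤ (C : ℝ≥0∞) ^ n * ∫⁻ x, g x ∂m := by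
  have hgm : AEMeasurable g (m.map (α^[n])) := hg.mono_ac (map_iter_ac hmeas hC n)
  rw [← lintegral_map' hgm (hmeas.iterate n).aemeasurable]
  have hle : m.map (α^[n]) ≤ ((C : ℝ≥0∞) ^ n) • m := by
    refine Measure.le_iff.2 (fun s hs => ?_)
    rw [Measure.map_apply (hmeas.iterate n) hs, Measure.smul_apply, smul_eq_mul]
    exact preimage_iter_le hmeas hC n s hs
  calc ∫⁻ x, g x ∂(m.map (α^[n])) ≤ ∫⁻ x, g x ∂(((C : ℝ≥0∞) ^ n) • m) := lintegral_mono' hle le_rfl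
    _ = (C : ℝ≥0∞) ^ n * ∫⁻ x, g x ∂m := lintegral_smul_measure _ _

lemma aesm_abs {f : X → ℝ} (hf : AEStronglyMeasurable f m) :
    AEStronglyMeasurable (fun x => |f x|) m := by
  simpa [Real.norm_eq_abs] using hf.norm

lemma birkhoff_aesm (hmeas : Measurable α)
    (hC : ∀ s : Set X, MeasurableSet s → m (α ⁻¹' s) ≤ (C : ℝ≥0∞) * m s)
    {ρ : X → ℝ} (hρ : AEStronglyMeasurable ρ m) (n : ℕ) :
    AEStronglyMeasurable (birkhoff α ρ n) m := by
  have : birkhoff α ρ n = fun x => ∑ i ∈ Finset.range n, ρ (α^[i] x) := rfl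
  rw [this]
  exact Finset.aestronglyMeasurable_fun_sum _ (fun i _ => aesm_comp_iter hmeas hC i hρ)

lemma birkhoff_ae_bound (hmeas : Measurable α)
    (hC : ∀ s : Set X, MeasurableSet s → m (α ⁻¹' s) ≤ (C : ℝ≥0∞) * m s)
    {ρ : X → ℝ} (hρ : MemLp ρ ⊤ m) :
    ∃ M : ℝ, 0 ≤ M ∧ ∀ n : ℕ, ∀ᵐ x ∂m, |birkhoff α ρ n x| ≤ n * M := by
  refine ⟨(eLpNorm ρ ⊤ m).toReal, ENNReal.toReal_nonneg, fun n => ?_⟩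
  have hbd : ∀ᵐ x ∂m, |ρ x| ≤ (eLpNorm ρ ⊤ m).toReal := by
    filter_upwards [ae_le_eLpNormEssSup (f := ρ) (μ := m)] with x hx
    have h2 : (‖ρ x‖₊ : ℝ≥0∞).toReal ≤ (eLpNorm ρ ⊤ m).toReal := by
      refine ENNReal.toReal_mono ?_ (by rwa [eLpNorm_exponent_top])
      exact hρ.2.ne
    simpa [Real.norm_eq_abs] using h2
  have hall : ∀ᵐ x ∂m, ∀ i : ℕ, |ρ (α^[i] x)| ≤ (eLpNorm ρ ⊤ m).toReal := by
    rw [ae_all_iff]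
    exact fun i => ae_comp_iter hmeas hC hbd i
  filter_upwards [hall] with x hx
  calc |birkhoff α ρ n x| ≤ ∑ i ∈ Finset.range n, |ρ (α^[i] x)| :=
        Finset.abs_sum_le_sum_abs _ _
    _ ≤ ∑ _i ∈ Finset.range n, (eLpNorm ρ ⊤ m).toReal :=
        Finset.sum_le_sum (fun i _ => hx i)
    _ = n * (eLpNorm ρ ⊤ m).toReal := by simp [Finset.sum_const, mul_comm]

/-- The lower Lebesgue integral corresponding to `∫ e^{S_nρ}|f∘αⁿ| dm`. -/
def wJ (m : Measure X) (α : X → X) (ρ f : X → ℝ) (n : ℕ) : ℝ≥0∞ :=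
  ∫⁻ x, ENNReal.ofReal (Real.exp (birkhoff α ρ n x) * |f (α^[n] x)|) ∂m

lemma wInt_aesm (hmeas : Measurable α)
    (hC : ∀ s : Set X, MeasurableSet s → m (α ⁻¹' s) ≤ (C : ℝ≥0∞) * m s)
    {ρ f : X → ℝ} (hρ : AEStronglyMeasurable ρ m) (hf : AEStronglyMeasurable f m) (n : ℕ) :
    AEStronglyMeasurable (fun x => Real.exp (birkhoff α ρ n x) * |f (α^[n] x)|) m := by
  have h1 : AEStronglyMeasurable (fun x => Real.exp (birkhoff α ρ n x)) m :=
    Real.continuous_exp.comp_aestronglyMeasurable (birkhoff_aesm hmeas hC hρ n)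
  have h2 : AEStronglyMeasurable (fun x => |f (α^[n] x)|) m :=
    aesm_abs (aesm_comp_iter hmeas hC n hf)
  exact h1.mul h2

lemma integral_eq_wJ (hmeas : Measurable α)
    (hC : ∀ s : Set X, MeasurableSet s → m (α ⁻¹' s) ≤ (C : ℝ≥0∞) * m s)
    {ρ f : X → ℝ} (hρ : AEStronglyMeasurable ρ m) (hf : AEStronglyMeasurable f m) (n : ℕ) :
    ∫ x, Real.exp (birkhoff α ρ n x) * |f (α^[n] x)| ∂m = (wJ m α ρ f n).toReal := by
  exact integral_eq_lintegral_of_nonneg_ae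
    (Filter.Eventually.of_forall (fun x => by positivity)) (wInt_aesm hmeas hC hρ hf n)

lemma wJ_le (hmeas : Measurable α)
    (hC : ∀ s : Set X, MeasurableSet s → m (α ⁻¹' s) ≤ (C : ℝ≥0∞) * m s)
    {ρ f : X → ℝ} (hf : f ∈ UnitL1 m) (n : ℕ) {M : ℝ}
    (hbd : ∀ᵐ x ∂m, |birkhoff α ρ n x| ≤ n * M) :
    wJ m α ρ f n ≤ ENNReal.ofReal (Real.exp (n * M)) * (C : ℝ≥0∞) ^ n := by
  have habs : AEMeasurable (fun x => ENNReal.ofReal (|f x|)) m :=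
    ENNReal.measurable_ofReal.comp_aemeasurable (aesm_abs hf.1.aestronglyMeasurable).aemeasurable
  have h1 : wJ m α ρ f n ≤
      ∫⁻ x, ENNReal.ofReal (Real.exp (n * M)) * ENNReal.ofReal (|f (α^[n] x)|) ∂m := by
    refine lintegral_mono_ae ?_
    filter_upwards [hbd] with x hx
    rw [← ENNReal.ofReal_mul (Real.exp_nonneg _)]
    refine ENNReal.ofReal_le_ofReal ?_
    have : Real.exp (birkhoff α ρ n x) ≤ Real.exp (n * M) :=
      Real.exp_le_exp.2 (le_trans (le_abs_self _) hx)
    exact mul_le_mul_of_nonneg_right this (abs_nonneg _)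
  have h2 : ∫⁻ x, ENNReal.ofReal (Real.exp (n * M)) * ENNReal.ofReal (|f (α^[n] x)|) ∂m
      = ENNReal.ofReal (Real.exp (n * M)) * ∫⁻ x, ENNReal.ofReal (|f (α^[n] x)|) ∂m :=
    lintegral_const_mul' _ _ ENNReal.ofReal_ne_top
  have h3 : ∫⁻ x, ENNReal.ofReal (|f (α^[n] x)|) ∂m ≤ (C : ℝ≥0∞) ^ n := by
    have h4 : ∫⁻ x, ENNReal.ofReal (|f (α^[n] x)|) ∂m
        ≤ (C : ℝ≥0∞) ^ n * ∫⁻ x, ENNReal.ofReal (|f x|) ∂m :=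
      lintegral_comp_iter_le hmeas hC n habs
    have h5 : ∫⁻ x, ENNReal.ofReal (|f x|) ∂m = 1 := by
      rw [← ofReal_integral_eq_lintegral_ofReal hf.1.abs
        (Filter.Eventually.of_forall (fun x => abs_nonneg _)), hf.2]
      simp
    rw [h5, mul_one] at h4
    exact h4
  calc wJ m α ρ f n ≤ _ := h1
    _ = _ := h2
    _ ≤ ENNReal.ofReal (Real.exp (n * M)) * (C : ℝ≥0∞) ^ n := mul_le_mul_right h3 _

lemma wJ_lt_top (hmeas : Measurable α)
    (hC : ∀ s : Set X, MeasurableSet s → m (α ⁻¹' s) ≤ (C : ℝ≥0∞) * m s)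
    {ρ f : X → ℝ} (hf : f ∈ UnitL1 m) (n : ℕ) {M : ℝ}
    (hbd : ∀ᵐ x ∂m, |birkhoff α ρ n x| ≤ n * M) :
    wJ m α ρ f n < ⊤ :=
  lt_of_le_of_lt (wJ_le hmeas hC hf n hbd)
    (ENNReal.mul_lt_top ENNReal.ofReal_lt_top (ENNReal.pow_lt_top ENNReal.coe_lt_top))

lemma birkhoff_combo (φ ψ : X → ℝ) (t : ℝ) (n : ℕ) (x : X) :
    birkhoff α (t • φ + (1 - t) • ψ) n x
      = t * birkhoff α φ n x + (1 - t) * birkhoff α ψ n x := by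
  simp [birkhoff, Finset.mul_sum, ← Finset.sum_add_distrib]

lemma wJ_holder (hmeas : Measurable α)
    (hC : ∀ s : Set X, MeasurableSet s → m (α ⁻¹' s) ≤ (C : ℝ≥0∞) * m s)
    {φ ψ f : X → ℝ} {t : ℝ} (ht0 : 0 < t) (ht1 : t < 1)
    (hφ : AEStronglyMeasurable φ m) (hψ : AEStronglyMeasurable ψ m)
    (hf : AEStronglyMeasurable f m) (n : ℕ) :
    wJ m α (t • φ + (1 - t) • ψ) f n ≤ (wJ m α φ f n) ^ t * (wJ m α ψ f n) ^ (1 - t) := by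
  set u : X → ℝ≥0∞ := fun x => ENNReal.ofReal (Real.exp (birkhoff α φ n x) * |f (α^[n] x)|)
    with hu_def
  set v : X → ℝ≥0∞ := fun x => ENNReal.ofReal (Real.exp (birkhoff α ψ n x) * |f (α^[n] x)|)
    with hv_def
  have ht1' : (0:ℝ) < 1 - t := by linarith
  -- pointwise identity
  have hpt : ∀ x, ENNReal.ofReal
      (Real.exp (birkhoff α (t • φ + (1 - t) • ψ) n x) * |f (α^[n] x)|)
      = u x ^ t * v x ^ (1 - t) := by
    intro x
    set a := birkhoff α φ n x
    set b := birkhoff α ψ n x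
    set c := |f (α^[n] x)| with hc_def
    have hc : 0 ≤ c := abs_nonneg _
    have hreal : Real.exp (t * a + (1 - t) * b) * c
        = (Real.exp a * c) ^ t * ((Real.exp b * c) ^ (1 - t)) := by
      rw [Real.mul_rpow (Real.exp_nonneg _) hc, Real.mul_rpow (Real.exp_nonneg _) hc,
        ← Real.exp_mul, ← Real.exp_mul]
      have hcc : c ^ t * c ^ (1 - t) = c := by
        rw [← Real.rpow_add_of_nonneg hc ht0.le ht1'.le]
        simp
      calc Real.exp (t * a + (1 - t) * b) * c
          = (Real.exp (a * t) * Real.exp (b * (1 - t))) * (c ^ t * c ^ (1 - t)) := by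
            rw [hcc, ← Real.exp_add]; ring_nf
        _ = Real.exp (a * t) * c ^ t * (Real.exp (b * (1 - t)) * c ^ (1 - t)) := by ring
    rw [birkhoff_combo, hreal, ENNReal.ofReal_mul (Real.rpow_nonneg (by positivity) _),
      ← ENNReal.ofReal_rpow_of_nonneg (by positivity) ht0.le,
      ← ENNReal.ofReal_rpow_of_nonneg (by positivity) ht1'.le]
  have hu : AEMeasurable u m :=
    ENNReal.measurable_ofReal.comp_aemeasurable (wInt_aesm hmeas hC hφ hf n).aemeasurable
  have hv : AEMeasurable v m :=
    ENNReal.measurable_ofReal.comp_aemeasurable (wInt_aesm hmeas hC hψ hf n).aemeasurable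
  have hpq : (1/t).HolderConjugate (1/(1-t)) := by
    rw [Real.holderConjugate_iff]
    constructor
    · exact one_lt_one_div ht0 ht1
    · field_simp; ring
  have hut : AEMeasurable (fun x => u x ^ t) m :=
    (ENNReal.continuous_rpow_const.measurable).comp_aemeasurable hu
  have hvt : AEMeasurable (fun x => v x ^ (1-t)) m :=
    (ENNReal.continuous_rpow_const.measurable).comp_aemeasurable hv
  have hH := ENNReal.lintegral_mul_le_Lp_mul_Lq m hpq hut hvt
  have e1 : ∀ x, (u x ^ t) ^ (1/t) = u x := by
    intro x
    rw [← ENNReal.rpow_mul, mul_one_div_cancel ht0.ne']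
    exact ENNReal.rpow_one _
  have e2 : ∀ x, (v x ^ (1-t)) ^ (1/(1-t)) = v x := by
    intro x
    rw [← ENNReal.rpow_mul, mul_one_div_cancel ht1'.ne']
    exact ENNReal.rpow_one _
  have hwj : wJ m α (t • φ + (1 - t) • ψ) f n = ∫⁻ x, u x ^ t * v x ^ (1-t) ∂m := by
    unfold wJ
    exact lintegral_congr (fun x => hpt x)
  rw [hwj]
  calc ∫⁻ x, u x ^ t * v x ^ (1-t) ∂m
      ≤ (∫⁻ x, (u x ^ t) ^ (1/t) ∂m) ^ (1/(1/t))
        * (∫⁻ x, (v x ^ (1-t)) ^ (1/(1-t)) ∂m) ^ (1/(1/(1-t))) := hH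
    _ = (wJ m α φ f n) ^ t * (wJ m α ψ f n) ^ (1 - t) := by
        rw [one_div_one_div, one_div_one_div]
        congr 1
        · congr 1; exact lintegral_congr e1
        · congr 1; exact lintegral_congr e2

lemma exists_unit_pos (hm : m ≠ 0) [SigmaFinite m] (hmeas : Measurable α)
    (hC : ∀ s : Set X, MeasurableSet s → m (α ⁻¹' s) ≤ (C : ℝ≥0∞) * m s)
    {ρ : X → ℝ} (hρ : MemLp ρ ⊤ m) (n : ℕ) :
    ∃ f₀ ∈ UnitL1 m, 0 < wJ m α ρ f₀ n := by
  obtain ⟨M, hM0, hMb⟩ := birkhoff_ae_bound hmeas hC hρ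
  -- find a spanning set with positive preimage measure
  have hU : (⋃ k, α^[n] ⁻¹' spanningSets m k) = Set.univ := by
    rw [← Set.preimage_iUnion, iUnion_spanningSets, Set.preimage_univ]
  have hk : ∃ k, m (α^[n] ⁻¹' spanningSets m k) ≠ 0 := by
    by_contra h
    push_neg at h
    have h0 : m (⋃ k, α^[n] ⁻¹' spanningSets m k) = 0 := measure_iUnion_null h
    rw [hU] at h0
    exact hm (Measure.measure_univ_eq_zero.mp h0)
  obtain ⟨k, hk⟩ := hk
  set s := spanningSets m k with hs_def
  have hs_meas : MeasurableSet s := measurableSet_spanningSets m k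
  have hs_top : m s < ⊤ := measure_spanningSets_lt_top m k
  have hs_ne : m s ≠ 0 := by
    intro h0
    exact hk (null_preimage_iter hmeas hC n h0)
  have hpre_top : m (α^[n] ⁻¹' s) < ⊤ :=
    lt_of_le_of_lt (preimage_iter_le hmeas hC n s hs_meas)
      (ENNReal.mul_lt_top (ENNReal.pow_lt_top ENNReal.coe_lt_top) hs_top)
  set c := (m s).toReal⁻¹ with hc_def
  have hc : 0 < c := inv_pos.2 (ENNReal.toReal_pos hs_ne hs_top.ne)
  set f₀ : X → ℝ := fun x => c * s.indicator (fun _ => (1:ℝ)) x with hf₀_def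
  have hf₀_nonneg : ∀ x, 0 ≤ f₀ x := by
    intro x
    exact mul_nonneg hc.le (Set.indicator_nonneg (fun _ _ => zero_le_one) x)
  have hf₀_int : Integrable f₀ m := by
    refine Integrable.const_mul ?_ c
    rw [integrable_indicator_iff hs_meas]
    exact integrableOn_const hs_top.ne
  have hf₀_unit : f₀ ∈ UnitL1 m := by
    refine ⟨hf₀_int, ?_⟩
    have habs : ∀ x, |f₀ x| = f₀ x := fun x => abs_of_nonneg (hf₀_nonneg x)
    have habs' : ∀ x, |c * s.indicator (fun _ => (1:ℝ)) x| = c * s.indicator (fun _ => (1:ℝ)) x :=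
      habs
    simp only [habs, hf₀_def, habs']
    rw [integral_const_mul, integral_indicator_const _ hs_meas]
    simp only [smul_eq_mul, mul_one, hc_def]
    exact inv_mul_cancel₀ (ENNReal.toReal_pos hs_ne hs_top.ne).ne'
  refine ⟨f₀, hf₀_unit, ?_⟩
  set d := ENNReal.ofReal (Real.exp (-(n * M)) * c) with hd_def
  have hd : 0 < d := ENNReal.ofReal_pos.2 (by positivity)
  have key : ∀ᵐ x ∂m, (α^[n] ⁻¹' s).indicator (fun _ => d) x
      ≤ ENNReal.ofReal (Real.exp (birkhoff α ρ n x) * |f₀ (α^[n] x)|) := by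
    filter_upwards [hMb n] with x hx
    by_cases hxs : x ∈ α^[n] ⁻¹' s
    · rw [Set.indicator_of_mem hxs]
      have hfx : f₀ (α^[n] x) = c := by
        have hxm : α^[n] x ∈ s := hxs
        simp [hf₀_def, Set.indicator_of_mem hxm]
      rw [hfx, abs_of_nonneg hc.le, hd_def]
      refine ENNReal.ofReal_le_ofReal ?_
      refine mul_le_mul_of_nonneg_right ?_ hc.le
      exact Real.exp_le_exp.2 (neg_le_of_abs_le hx)
    · rw [Set.indicator_of_notMem hxs]
      exact zero_le
  have hlow : d * m (α^[n] ⁻¹' s) ≤ wJ m α ρ f₀ n := by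
    have := lintegral_mono_ae key
    rwa [lintegral_indicator_const (hmeas.iterate n hs_meas) d] at this
  refine lt_of_lt_of_le ?_ hlow
  exact ENNReal.mul_pos hd.ne' hk

lemma Sset_bddAbove (hmeas : Measurable α)
    (hC : ∀ s : Set X, MeasurableSet s → m (α ⁻¹' s) ≤ (C : ℝ≥0∞) * m s)
    {ρ : X → ℝ} (hρ : MemLp ρ ⊤ m) (n : ℕ) :
    BddAbove {r : ℝ | ∃ f ∈ UnitL1 m,
      r = ∫ x, Real.exp (birkhoff α ρ n x) * |f (α^[n] x)| ∂m} := by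
  obtain ⟨M, _, hM⟩ := birkhoff_ae_bound hmeas hC hρ
  refine ⟨(ENNReal.ofReal (Real.exp (n * M)) * (C : ℝ≥0∞) ^ n).toReal, ?_⟩
  rintro r ⟨f, hf, rfl⟩
  rw [integral_eq_wJ hmeas hC hρ.aestronglyMeasurable hf.1.aestronglyMeasurable n]
  exact ENNReal.toReal_mono
    (ENNReal.mul_ne_top ENNReal.ofReal_ne_top (ENNReal.pow_lt_top ENNReal.coe_lt_top).ne)
    (wJ_le hmeas hC hf n (hM n))

lemma wOpNorm_nonneg (ρ : X → ℝ) (n : ℕ) : 0 ≤ weightedOpNorm m α ρ n := by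
  refine Real.sSup_nonneg ?_
  rintro r ⟨f, hf, rfl⟩
  exact integral_nonneg (fun x => by positivity)

lemma wOpNorm_pos (hm : m ≠ 0) [SigmaFinite m] (hmeas : Measurable α)
    (hC : ∀ s : Set X, MeasurableSet s → m (α ⁻¹' s) ≤ (C : ℝ≥0∞) * m s)
    {ρ : X → ℝ} (hρ : MemLp ρ ⊤ m) (n : ℕ) :
    0 < weightedOpNorm m α ρ n := by
  obtain ⟨M, _, hM⟩ := birkhoff_ae_bound hmeas hC hρ
  obtain ⟨f₀, hf₀, hwpos⟩ := exists_unit_pos hm hmeas hC hρ n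
  have hmem : (wJ m α ρ f₀ n).toReal ∈ {r : ℝ | ∃ f ∈ UnitL1 m,
      r = ∫ x, Real.exp (birkhoff α ρ n x) * |f (α^[n] x)| ∂m} :=
    ⟨f₀, hf₀, (integral_eq_wJ hmeas hC hρ.aestronglyMeasurable hf₀.1.aestronglyMeasurable n).symm⟩
  have hpos : 0 < (wJ m α ρ f₀ n).toReal :=
    ENNReal.toReal_pos hwpos.ne' (wJ_lt_top hmeas hC hf₀ n (hM n)).ne
  exact lt_of_lt_of_le hpos (le_csSup (Sset_bddAbove hmeas hC hρ n) hmem)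

lemma le_wOpNorm (hmeas : Measurable α)
    (hC : ∀ s : Set X, MeasurableSet s → m (α ⁻¹' s) ≤ (C : ℝ≥0∞) * m s)
    {ρ : X → ℝ} (hρ : MemLp ρ ⊤ m) {f : X → ℝ} (hf : f ∈ UnitL1 m) (n : ℕ) :
    (wJ m α ρ f n).toReal ≤ weightedOpNorm m α ρ n :=
  le_csSup (Sset_bddAbove hmeas hC hρ n)
    ⟨f, hf, (integral_eq_wJ hmeas hC hρ.aestronglyMeasurable hf.1.aestronglyMeasurable n).symm⟩

lemma wOpNorm_holder (hm : m ≠ 0) [SigmaFinite m] (hmeas : Measurable α)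
    (hC : ∀ s : Set X, MeasurableSet s → m (α ⁻¹' s) ≤ (C : ℝ≥0∞) * m s)
    {φ ψ : X → ℝ} {t : ℝ} (ht0 : 0 < t) (ht1 : t < 1)
    (hφ : MemLp φ ⊤ m) (hψ : MemLp ψ ⊤ m) (n : ℕ) :
    weightedOpNorm m α (t • φ + (1 - t) • ψ) n
      ≤ (weightedOpNorm m α φ n) ^ t * (weightedOpNorm m α ψ n) ^ (1 - t) := by
  have ht1' : (0:ℝ) < 1 - t := by linarith
  have hmix : MemLp (t • φ + (1 - t) • ψ) ⊤ m := (hφ.const_smul t).add (hψ.const_smul (1 - t))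
  obtain ⟨Mφ, _, hMφ⟩ := birkhoff_ae_bound hmeas hC hφ
  obtain ⟨Mψ, _, hMψ⟩ := birkhoff_ae_bound hmeas hC hψ
  obtain ⟨f₀, hf₀, _⟩ := exists_unit_pos hm hmeas hC hmix n
  refine csSup_le ⟨_, f₀, hf₀, rfl⟩ ?_
  rintro r ⟨f, hf, rfl⟩
  rw [integral_eq_wJ hmeas hC hmix.aestronglyMeasurable hf.1.aestronglyMeasurable n]
  have hJφ : wJ m α φ f n ≠ ⊤ := (wJ_lt_top hmeas hC hf n (hMφ n)).ne
  have hJψ : wJ m α ψ f n ≠ ⊤ := (wJ_lt_top hmeas hC hf n (hMψ n)).ne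
  have hH := wJ_holder hmeas hC ht0 ht1 hφ.aestronglyMeasurable hψ.aestronglyMeasurable
    hf.1.aestronglyMeasurable n
  have hfin : (wJ m α φ f n) ^ t * (wJ m α ψ f n) ^ (1 - t) ≠ ⊤ :=
    ENNReal.mul_ne_top (ENNReal.rpow_ne_top_of_nonneg ht0.le hJφ)
      (ENNReal.rpow_ne_top_of_nonneg ht1'.le hJψ)
  calc (wJ m α (t • φ + (1 - t) • ψ) f n).toReal
      ≤ ((wJ m α φ f n) ^ t * (wJ m α ψ f n) ^ (1 - t)).toReal := ENNReal.toReal_mono hfin hH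
    _ = (wJ m α φ f n).toReal ^ t * (wJ m α ψ f n).toReal ^ (1 - t) := by
        rw [ENNReal.toReal_mul, ENNReal.toReal_rpow, ENNReal.toReal_rpow]
    _ ≤ (weightedOpNorm m α φ n) ^ t * (weightedOpNorm m α ψ n) ^ (1 - t) := by
        refine mul_le_mul
          (Real.rpow_le_rpow ENNReal.toReal_nonneg (le_wOpNorm hmeas hC hφ hf n) ht0.le)
          (Real.rpow_le_rpow ENNReal.toReal_nonneg (le_wOpNorm hmeas hC hψ hf n) ht1'.le)
          (Real.rpow_nonneg ENNReal.toReal_nonneg _)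
          (Real.rpow_nonneg (wOpNorm_nonneg φ n) _)

end AuxConvex

/-- The function `φ ↦ λ(φ)` (the logarithm of the spectral radius of the weighted shift
operator `A_φ`) is convex on `L^∞(X,m)`. -/
theorem lambda_convex
    (m : Measure X) [SigmaFinite m] (α : X → X) (hα : ShiftBounded m α)
    (φ ψ : X → ℝ) (hφ : MemLp φ ⊤ m) (hψ : MemLp ψ ⊤ m)
    (t : ℝ) (ht0 : 0 ≤ t) (ht1 : t ≤ 1) (lφ lψ l : ℝ)
    (hφlim : Tendsto (fun n : ℕ => Real.log (weightedOpNorm m α φ n) / n) atTop (𝓝 lφ))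
    (hψlim : Tendsto (fun n : ℕ => Real.log (weightedOpNorm m α ψ n) / n) atTop (𝓝 lψ))
    (hlim : Tendsto (fun n : ℕ =>
        Real.log (weightedOpNorm m α (t • φ + (1 - t) • ψ) n) / n) atTop (𝓝 l)) :
    l ≤ t * lφ + (1 - t) * lψ := by
  obtain ⟨hmeas, C, hC⟩ := hα
  by_cases hm : m = 0
  · -- trivial case: the measure is zero
    subst hm
    have hempty : ∀ ρ : X → ℝ, ∀ n : ℕ, weightedOpNorm (0 : Measure X) α ρ n = 0 := by
      intro ρ n
      unfold weightedOpNorm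
      convert Real.sSup_empty using 2
      ext r
      simp only [Set.mem_setOf_eq, Set.mem_empty_iff_false, iff_false, not_exists]
      rintro f ⟨⟨-, hf1⟩, -⟩
      rw [integral_zero_measure] at hf1
      exact zero_ne_one hf1
    have h0 : ∀ ρ : X → ℝ, Tendsto
        (fun n : ℕ => Real.log (weightedOpNorm (0 : Measure X) α ρ n) / n) atTop (𝓝 0) := by
      intro ρ
      simp only [hempty, Real.log_zero, zero_div]
      exact tendsto_const_nhds
    have hl : l = 0 := tendsto_nhds_unique hlim (h0 _)
    have hlφ : lφ = 0 := tendsto_nhds_unique hφlim (h0 _)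
    have hlψ : lψ = 0 := tendsto_nhds_unique hψlim (h0 _)
    rw [hl, hlφ, hlψ]
    ring_nf
    exact le_refl _
  rcases ht0.eq_or_lt with h0 | h0
  · -- t = 0
    have hfun : t • φ + (1 - t) • ψ = ψ := by
      funext x
      simp [← h0]
    rw [hfun] at hlim
    have hl : l = lψ := tendsto_nhds_unique hlim hψlim
    rw [hl, ← h0]
    ring_nf
    exact le_refl _
  rcases ht1.eq_or_lt with h1 | h1
  · -- t = 1
    have hfun : t • φ + (1 - t) • ψ = φ := by
      funext x
      simp [h1]
    rw [hfun] at hlim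
    have hl : l = lφ := tendsto_nhds_unique hlim hφlim
    rw [hl, h1]
    ring_nf
    exact le_refl _
  -- main case 0 < t < 1
  have ht1' : (0:ℝ) < 1 - t := by linarith
  have hmix : MemLp (t • φ + (1 - t) • ψ) ⊤ m := (hφ.const_smul t).add (hψ.const_smul (1 - t))
  have key : ∀ n : ℕ,
      Real.log (weightedOpNorm m α (t • φ + (1 - t) • ψ) n)
        ≤ t * Real.log (weightedOpNorm m α φ n) + (1 - t) * Real.log (weightedOpNorm m α ψ n) := by
    intro n
    have hposφ : 0 < weightedOpNorm m α φ n := wOpNorm_pos hm hmeas hC hφ n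
    have hposψ : 0 < weightedOpNorm m α ψ n := wOpNorm_pos hm hmeas hC hψ n
    have hposm : 0 < weightedOpNorm m α (t • φ + (1 - t) • ψ) n :=
      wOpNorm_pos hm hmeas hC hmix n
    have hsub := wOpNorm_holder hm hmeas hC h0 h1 hφ hψ n
    have hlog := Real.log_le_log hposm hsub
    rwa [Real.log_mul (Real.rpow_pos_of_pos hposφ t).ne' (Real.rpow_pos_of_pos hposψ (1-t)).ne',
      Real.log_rpow hposφ, Real.log_rpow hposψ] at hlog
  have keydiv : ∀ n : ℕ,
      Real.log (weightedOpNorm m α (t • φ + (1 - t) • ψ) n) / n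
        ≤ t * (Real.log (weightedOpNorm m α φ n) / n)
          + (1 - t) * (Real.log (weightedOpNorm m α ψ n) / n) := by
    intro n
    rcases Nat.eq_zero_or_pos n with hn | hn
    · subst hn; simp
    have hn' : (0:ℝ) < n := by exact_mod_cast hn
    rw [mul_div_assoc' , mul_div_assoc', ← add_div]
    exact (div_le_div_iff_of_pos_right hn').mpr (key n)
  have hrhs : Tendsto (fun n : ℕ =>
      t * (Real.log (weightedOpNorm m α φ n) / n)
        + (1 - t) * (Real.log (weightedOpNorm m α ψ n) / n)) atTop
      (𝓝 (t * lφ + (1 - t) * lψ)) :=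
    (hφlim.const_mul t).add (hψlim.const_mul (1 - t))
  exact le_of_tendsto_of_tendsto' hlim hrhs keydiv
end TEntropyPaper
end
end

section
/- For every μ ∈ M(X,m) one has τ(μ) ≤ λ(0), where λ(0) = lim_{n→∞} (1/n) ln‖Aⁿ‖ is the logarithm of the spectral radius of the unweighted shift A. In particular, if the measure m is α-invariant then τ(μ) ≤ 0 for every μ ∈ M(X,m). -/
open MeasureTheory Filter Topology
open scoped Classical ENNReal NNReal

noncomputable section

namespace TEntropyPaper

variable {X : Type*} [MeasurableSpace X]

/-! ### Auxiliary lemmas -/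


lemma map_le_smul (m : Measure X) (α : X → X) (hm : Measurable α) (C : ℝ≥0)
    (hC : ∀ s : Set X, MeasurableSet s → m (α ⁻¹' s) ≤ (C : ℝ≥0∞) * m s) :
    m.map α ≤ (C : ℝ≥0∞) • m := by
  refine Measure.le_iff.2 fun s hs => ?_
  rw [Measure.map_apply hm hs, Measure.smul_apply, smul_eq_mul]
  exact hC s hs

lemma qmp (m : Measure X) (α : X → X) (hm : Measurable α) (C : ℝ≥0)
    (hC : ∀ s : Set X, MeasurableSet s → m (α ⁻¹' s) ≤ (C : ℝ≥0∞) * m s) :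
    Measure.QuasiMeasurePreserving α m m :=
  ⟨hm, Measure.absolutelyContinuous_of_le_smul (map_le_smul m α hm C hC)⟩

lemma lintegral_comp_le (m : Measure X) (α : X → X) (hm : Measurable α) (C : ℝ≥0)
    (hC : ∀ s : Set X, MeasurableSet s → m (α ⁻¹' s) ≤ (C : ℝ≥0∞) * m s)
    (h : X → ℝ≥0∞) (hh : AEMeasurable h m) :
    ∫⁻ x, h (α x) ∂m ≤ (C : ℝ≥0∞) * ∫⁻ x, h x ∂m := by
  have h1 : AEMeasurable h (m.map α) :=
    hh.mono_ac (Measure.absolutelyContinuous_of_le_smul (map_le_smul m α hm C hC))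
  calc ∫⁻ x, h (α x) ∂m = ∫⁻ y, h y ∂(m.map α) := (lintegral_map' h1 hm.aemeasurable).symm
    _ ≤ ∫⁻ y, h y ∂((C : ℝ≥0∞) • m) := lintegral_mono' (map_le_smul m α hm C hC) le_rfl
    _ = (C : ℝ≥0∞) * ∫⁻ x, h x ∂m := lintegral_smul_measure _ _

lemma lintegral_comp_iterate_le_s8 (m : Measure X) (α : X → X) (hm : Measurable α) (C : ℝ≥0)
    (hC : ∀ s : Set X, MeasurableSet s → m (α ⁻¹' s) ≤ (C : ℝ≥0∞) * m s)
    (h : X → ℝ≥0∞) (hh : AEMeasurable h m) (n : ℕ) :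
    ∫⁻ x, h (α^[n] x) ∂m ≤ (C : ℝ≥0∞) ^ n * ∫⁻ x, h x ∂m := by
  induction n with
  | zero => simp
  | succ n ih =>
    have hqmp := (qmp m α hm C hC).iterate n
    have hh' : AEMeasurable (fun x => h (α^[n] x)) m := hh.comp_quasiMeasurePreserving hqmp
    calc ∫⁻ x, h (α^[n+1] x) ∂m = ∫⁻ x, h (α^[n] (α x)) ∂m := by
          simp [Function.iterate_succ_apply]
      _ ≤ (C : ℝ≥0∞) * ∫⁻ x, h (α^[n] x) ∂m := lintegral_comp_le m α hm C hC _ hh'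
      _ ≤ (C : ℝ≥0∞) * ((C : ℝ≥0∞) ^ n * ∫⁻ x, h x ∂m) := mul_le_mul_right ih _
      _ = (C : ℝ≥0∞) ^ (n+1) * ∫⁻ x, h x ∂m := by ring

lemma integral_abs_comp_le (m : Measure X) (α : X → X) (hm : Measurable α) (C : ℝ≥0)
    (hC : ∀ s : Set X, MeasurableSet s → m (α ⁻¹' s) ≤ (C : ℝ≥0∞) * m s)
    (n : ℕ) (f : X → ℝ) (hfi : Integrable f m) (hf1 : ∫ x, |f x| ∂m = 1) :
    ∫ x, |f (α^[n] x)| ∂m ≤ (C : ℝ)^n := by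
  have hfm : AEMeasurable f m := hfi.aemeasurable
  have habs : AEMeasurable (fun x => |f x|) m :=
    hfm.norm.congr (Eventually.of_forall fun x => by simp [Real.norm_eq_abs])
  have hcomp : AEMeasurable (fun x => |f (α^[n] x)|) m :=
    habs.comp_quasiMeasurePreserving ((qmp m α hm C hC).iterate n)
  have h1 : ∫⁻ x, ENNReal.ofReal (|f x|) ∂m = 1 := by
    rw [← ofReal_integral_eq_lintegral_ofReal hfi.abs (ae_of_all _ fun x => abs_nonneg _),
      hf1, ENNReal.ofReal_one]
  have h2 : ∫⁻ x, ENNReal.ofReal (|f (α^[n] x)|) ∂m ≤ (C : ℝ≥0∞) ^ n := by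
    calc ∫⁻ x, ENNReal.ofReal (|f (α^[n] x)|) ∂m
        ≤ (C : ℝ≥0∞) ^ n * ∫⁻ x, ENNReal.ofReal (|f x|) ∂m :=
          lintegral_comp_iterate_le_s8 m α hm C hC _ habs.ennreal_ofReal n
      _ = (C : ℝ≥0∞) ^ n := by rw [h1, mul_one]
  rw [integral_eq_lintegral_of_nonneg_ae (ae_of_all _ fun x => abs_nonneg _)
    (aestronglyMeasurable_iff_aemeasurable.2 hcomp)]
  calc (∫⁻ x, ENNReal.ofReal (|f (α^[n] x)|) ∂m).toReal
      ≤ ((C : ℝ≥0∞) ^ n).toReal := ENNReal.toReal_mono (by simp) h2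
    _ = (C : ℝ)^n := by simp

/-- The trivial partition of unity. -/
lemma isPartUnity_singleton_one (m : Measure X) :
    IsPartUnity m ({fun _ => (1 : ℝ)} : Finset (X → ℝ)) := by
  constructor
  · intro g hg
    rw [Finset.mem_singleton] at hg
    subst hg
    exact ⟨memLp_top_const 1, ae_of_all _ fun x => zero_le_one⟩
  · exact ae_of_all _ fun x => by simp

lemma tauN_le_sup (m : Measure X) (α : X → X) (μ : PosFunctional m) (n : ℕ) (b : EReal)
    (hb : ∀ f ∈ UnitL1 m,
      tauTermR m α n (μ.toFun (fun _ => 1)) f (fun _ => (1 : ℝ)) ≤ b) :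
    tauN m α μ n ≤ b := by
  have hmem : ({fun _ => (1 : ℝ)} : Finset (X → ℝ)) ∈
      {D : Finset (X → ℝ) | IsPartUnity m D} := isPartUnity_singleton_one m
  refine le_trans (iInf₂_le _ hmem) ?_
  unfold tauND tauNDW
  split_ifs with h
  · exact bot_le
  · refine iSup₂_le fun f hf => ?_
    rw [Finset.sum_singleton]
    exact hb f hf

lemma wInt_one_nonneg (m : Measure X) (α : X → X) (n : ℕ) (f : X → ℝ) :
    0 ≤ wInt m α n (fun _ => (1 : ℝ)) f :=
  integral_nonneg fun x => by positivity

lemma tauN_le_log (m : Measure X) (α : X → X) (hα : ShiftBounded m α)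
    (μ : PosFunctional m) (n : ℕ) :
    tauN m α μ n ≤ ((Real.log (weightedOpNorm m α (fun _ => 0) n) : ℝ) : EReal) := by
  obtain ⟨hm, C, hC⟩ := hα
  refine tauN_le_sup m α μ n _ fun f hf => ?_
  unfold tauTermR
  rw [μ.map_one', if_neg one_ne_zero]
  split_ifs with h0
  · exact bot_le
  · have hpos : 0 < wInt m α n (fun _ => (1 : ℝ)) f :=
      lt_of_le_of_ne (wInt_one_nonneg m α n f) (Ne.symm h0)
    have hmemS : wInt m α n (fun _ => (1 : ℝ)) f ∈
        {r : ℝ | ∃ f ∈ UnitL1 m,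
          r = ∫ x, Real.exp (birkhoff α (fun _ => 0) n x) * |f (α^[n] x)| ∂m} :=
      ⟨f, hf, by simp [wInt, birkhoff]⟩
    have hbdd : ∀ r ∈ {r : ℝ | ∃ f ∈ UnitL1 m,
        r = ∫ x, Real.exp (birkhoff α (fun _ => 0) n x) * |f (α^[n] x)| ∂m},
        r ≤ (C : ℝ)^n := by
      rintro r ⟨f', hf', rfl⟩
      have : (∫ x, Real.exp (birkhoff α (fun _ => 0) n x) * |f' (α^[n] x)| ∂m)
          = ∫ x, |f' (α^[n] x)| ∂m := by simp [birkhoff]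
      rw [this]
      exact integral_abs_comp_le m α hm C hC n f' hf'.1 hf'.2
    have hle : wInt m α n (fun _ => (1 : ℝ)) f ≤ weightedOpNorm m α (fun _ => 0) n :=
      le_csSup ⟨(C : ℝ)^n, fun r hr => hbdd r hr⟩ hmemS
    have : (1 : ℝ) * Real.log (wInt m α n (fun _ => (1 : ℝ)) f / 1)
        ≤ Real.log (weightedOpNorm m α (fun _ => 0) n) := by
      rw [one_mul, div_one]
      exact Real.log_le_log hpos hle
    exact EReal.coe_le_coe_iff.2 this

set_option maxHeartbeats 1000000 in
/-- For every `μ ∈ M(X,m)` one has `τ(μ) ≤ λ(0)`, the logarithm of the spectral radius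
of the unweighted shift operator `A`.  In particular, if `m` is `α`-invariant then
`τ(μ) ≤ 0` for every `μ ∈ M(X,m)`. -/
theorem tEntropy_le_lambda_zero
    (m : Measure X) [SigmaFinite m] (α : X → X) (hα : ShiftBounded m α) (lam0 : ℝ)
    (hlam0 : Tendsto (fun n : ℕ => Real.log (weightedOpNorm m α (fun _ => 0) n) / n)
      atTop (𝓝 lam0)) :
    (∀ μ : PosFunctional m, tEntropy m α μ ≤ (lam0 : EReal)) ∧
      (MeasurePreserving α m m → ∀ μ : PosFunctional m, tEntropy m α μ ≤ (0 : EReal)) := by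
  constructor
  · intro μ
    have key : ∀ n : ℕ, 0 < n → tEntropy m α μ ≤
        ((Real.log (weightedOpNorm m α (fun _ => 0) n) / n : ℝ) : EReal) := by
      intro n hn
      set c : ℝ := ((n : ℝ)⁻¹ : ℝ) with hc
      set L : ℝ := Real.log (weightedOpNorm m α (fun _ => 0) n) with hL
      have h1 : tEntropy m α μ ≤ (c : EReal) * tauN m α μ n := by
        unfold tEntropy
        exact iInf_le
          (fun k : {k : ℕ // 0 < k} => ((((k : ℕ) : ℝ)⁻¹ : ℝ) : EReal) * tauN m α μ (k : ℕ))
          ⟨n, hn⟩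
      have hc0 : (0 : EReal) ≤ (c : EReal) := EReal.coe_nonneg.2 (by positivity)
      have h2 : (c : EReal) * tauN m α μ n ≤ (c : EReal) * (L : EReal) :=
        mul_le_mul_of_nonneg_left (tauN_le_log m α hα μ n) hc0
      have h3 : (c : EReal) * (L : EReal) = ((L / n : ℝ) : EReal) := by
        rw [← EReal.coe_mul, hc, inv_mul_eq_div]
      exact le_trans h1 (le_trans h2 (le_of_eq h3))
    refine ge_of_tendsto (EReal.tendsto_coe.2 hlam0) ?_
    filter_upwards [eventually_ge_atTop 1] with n hn
    exact key n hn
  · intro hmp μ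
    have htau : tauN m α μ 1 ≤ (0 : EReal) := by
      refine tauN_le_sup m α μ 1 _ fun f hf => ?_
      have hmap : m.map α = m := hmp.map_eq
      have hasm : AEStronglyMeasurable (fun y => |f y|) (m.map α) := by
        rw [hmap]
        exact (aestronglyMeasurable_iff_aemeasurable.2
          (hf.1.aemeasurable.norm.congr
            (Eventually.of_forall fun x => by simp [Real.norm_eq_abs])))
      have hwInt : wInt m α 1 (fun _ => (1 : ℝ)) f = 1 := by
        unfold wInt
        simp only [one_mul, Function.iterate_one]
        calc ∫ x, |f (α x)| ∂m = ∫ y, |f y| ∂(m.map α) :=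
              (integral_map hmp.measurable.aemeasurable hasm).symm
          _ = ∫ y, |f y| ∂m := by rw [hmap]
          _ = 1 := hf.2
      unfold tauTermR
      rw [μ.map_one', if_neg one_ne_zero, hwInt, if_neg one_ne_zero]
      norm_num
    calc tEntropy m α μ ≤
        ((((1 : ℕ) : ℝ)⁻¹ : ℝ) : EReal) * tauN m α μ 1 := by
          unfold tEntropy
          exact iInf_le
            (fun k : {k : ℕ // 0 < k} => ((((k : ℕ) : ℝ)⁻¹ : ℝ) : EReal) * tauN m α μ (k : ℕ))
            ⟨1, one_pos⟩
      _ = tauN m α μ 1 := by norm_num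
      _ ≤ 0 := htau

end TEntropyPaper
end
end

section
/- The t-entropy functional μ ↦ τ(μ) is upper semicontinuous on M(X,m) with respect to the weak-* topology. -/
open MeasureTheory Filter Topology
open scoped Classical ENNReal NNReal

noncomputable section

namespace TEntropyPaper

variable {X : Type*} [MeasurableSpace X]

/-- The scalar function `h(w,c) = w * ln (c/w)` with conventions. -/
def hFn (w c : ℝ) : EReal :=
  if w = 0 then 0 else if c = 0 then ⊥ else ((w * Real.log (c / w) : ℝ) : EReal)

lemma hFn_ne_top (w c : ℝ) : hFn w c ≠ ⊤ := by
  unfold hFn; split_ifs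
  · simp
  · simp
  · exact EReal.coe_ne_top _

lemma neg_mul_log_le {w : ℝ} (hw : 0 ≤ w) : -(w * Real.log w) ≤ 2 * Real.sqrt w := by
  rcases eq_or_lt_of_le hw with h | h
  · simp [← h]
  · have hs : 0 < Real.sqrt w := Real.sqrt_pos.2 h
    have hlog : Real.log w = 2 * Real.log (Real.sqrt w) := by
      rw [Real.log_sqrt hw]; ring
    have h1 : Real.log (Real.sqrt w)⁻¹ ≤ (Real.sqrt w)⁻¹ - 1 :=
      Real.log_le_sub_one_of_pos (inv_pos.2 hs)
    have h2 : -Real.log (Real.sqrt w) ≤ (Real.sqrt w)⁻¹ := by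
      rw [← Real.log_inv]; linarith
    have h3 : w * -Real.log (Real.sqrt w) ≤ w * (Real.sqrt w)⁻¹ :=
      mul_le_mul_of_nonneg_left h2 hw
    have h4 : w * (Real.sqrt w)⁻¹ = Real.sqrt w := by
      rw [← div_eq_mul_inv]; exact Real.div_sqrt
    nlinarith [h3, hlog, h4]

lemma hFn_le_rho {K w c : ℝ} (hK : 1 ≤ K) (hw : 0 ≤ w) (hc0 : 0 ≤ c) (hc : c ≤ K) :
    hFn w c ≤ ((w * Real.log K + 2 * Real.sqrt w : ℝ) : EReal) := by
  have hlogK : 0 ≤ Real.log K := Real.log_nonneg hK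
  have hrho : (0 : ℝ) ≤ w * Real.log K + 2 * Real.sqrt w := by positivity
  unfold hFn
  split_ifs with h1 h2
  · exact_mod_cast (by exact_mod_cast hrho : (0 : EReal) ≤ ((w * Real.log K + 2 * Real.sqrt w : ℝ) : EReal))
  · exact bot_le
  · have hw' : 0 < w := lt_of_le_of_ne hw (Ne.symm h1)
    have hc' : 0 < c := lt_of_le_of_ne hc0 (Ne.symm h2)
    rw [EReal.coe_le_coe_iff]
    have hlogc : Real.log c ≤ Real.log K := Real.log_le_log hc' hc
    have : w * Real.log (c / w) = w * Real.log c - w * Real.log w := by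
      rw [Real.log_div (ne_of_gt hc') (ne_of_gt hw')]; ring
    rw [this]
    have := neg_mul_log_le hw
    nlinarith [mul_le_mul_of_nonneg_left hlogc (le_of_lt hw')]

lemma hFn_usc {K w₀ c₀ : ℝ} (hK : 1 ≤ K) (hw₀ : 0 ≤ w₀) (hc₀ : 0 ≤ c₀) {y : EReal}
    (hy : hFn w₀ c₀ < y) (W C : ℕ → ℝ) (hW0 : ∀ k, 0 ≤ W k)
    (hC : ∀ k, 0 ≤ C k ∧ C k ≤ K)
    (hWt : Tendsto W atTop (𝓝 w₀)) (hCt : Tendsto C atTop (𝓝 c₀)) :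
    ∀ᶠ k in atTop, hFn (W k) (C k) < y := by
  rcases eq_or_lt_of_le hw₀ with hw0 | hwpos
  · -- w₀ = 0, hFn w₀ c₀ = 0 < y
    have h0 : hFn w₀ c₀ = 0 := by rw [hFn, if_pos hw0.symm]
    rw [h0] at hy
    obtain ⟨t, ht0, hty⟩ := EReal.exists_between_coe_real hy
    have ht0' : (0 : ℝ) < t := by exact_mod_cast ht0
    have hrho : Tendsto (fun k => W k * Real.log K + 2 * Real.sqrt (W k)) atTop
        (𝓝 (w₀ * Real.log K + 2 * Real.sqrt w₀)) := by
      exact ((hWt.mul_const _).add (((Real.continuous_sqrt.tendsto _).comp hWt).const_mul 2))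
    have hlim0 : w₀ * Real.log K + 2 * Real.sqrt w₀ = 0 := by
      rw [← hw0]; simp
    rw [hlim0] at hrho
    filter_upwards [hrho.eventually_lt_const ht0'] with k hk
    calc hFn (W k) (C k) ≤ ((W k * Real.log K + 2 * Real.sqrt (W k) : ℝ) : EReal) :=
          hFn_le_rho hK (hW0 k) (hC k).1 (hC k).2
      _ < (t : EReal) := by exact_mod_cast hk
      _ < y := hty
  · -- w₀ > 0
    rcases eq_or_lt_of_le hc₀ with hc0 | hcpos
    · -- c₀ = 0 : hFn w₀ c₀ = ⊥
      have hby : (⊥ : EReal) < y := by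
        rw [hFn, if_neg (ne_of_gt hwpos), if_pos hc0.symm] at hy; exact hy
      obtain ⟨t, _, hty⟩ := EReal.exists_between_coe_real hby
      set u : ℝ := min (t - 2 * Real.sqrt (w₀ + 1)) (-1) with hu
      have hu1 : u ≤ -1 := min_le_right _ _
      have hu2 : u ≤ t - 2 * Real.sqrt (w₀ + 1) := min_le_left _ _
      have hexp : (0 : ℝ) < Real.exp (2 * u / w₀) := Real.exp_pos _
      rw [← hc0] at hCt
      filter_upwards [hWt.eventually (Ioo_mem_nhds (by linarith : w₀ / 2 < w₀)
          (by linarith : w₀ < w₀ + 1)), hCt.eventually_lt_const hexp] with k hW hC2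
      have hWk : 0 < W k := lt_trans (by linarith : (0:ℝ) < w₀/2) hW.1
      rcases eq_or_lt_of_le (hC k).1 with hCk0 | hCkpos
      · rw [hFn, if_neg (ne_of_gt hWk), if_pos hCk0.symm]
        exact hby
      · rw [hFn, if_neg (ne_of_gt hWk), if_neg (ne_of_gt hCkpos)]
        have hlogC : Real.log (C k) < 2 * u / w₀ := by
          have := Real.log_lt_log hCkpos hC2
          rwa [Real.log_exp] at this
        have hneg : 2 * u / w₀ < 0 := by
          apply div_neg_of_neg_of_pos (by linarith) hwpos
        have h5 : W k * Real.log (C k) ≤ (w₀ / 2) * Real.log (C k) := by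
          apply mul_le_mul_of_nonpos_right hW.1.le (by linarith)
        have h6 : (w₀ / 2) * Real.log (C k) ≤ (w₀ / 2) * (2 * u / w₀) :=
          mul_le_mul_of_nonneg_left hlogC.le (by linarith)
        have h7 : (w₀ / 2) * (2 * u / w₀) = u := by field_simp
        have h8 : -(W k * Real.log (W k)) ≤ 2 * Real.sqrt (W k) := neg_mul_log_le hWk.le
        have h9 : Real.sqrt (W k) ≤ Real.sqrt (w₀ + 1) := Real.sqrt_le_sqrt hW.2.le
        have hval : W k * Real.log (C k / W k) ≤ t := by
          rw [Real.log_div (ne_of_gt hCkpos) (ne_of_gt hWk)]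
          nlinarith
        calc ((W k * Real.log (C k / W k) : ℝ) : EReal) ≤ (t : EReal) := by exact_mod_cast hval
          _ < y := hty
    · -- c₀ > 0 : real branch
      have hval0 : hFn w₀ c₀ = ((w₀ * Real.log (c₀ / w₀) : ℝ) : EReal) := by
        rw [hFn, if_neg (ne_of_gt hwpos), if_neg (ne_of_gt hcpos)]
      rw [hval0] at hy
      obtain ⟨t, ht1, hty⟩ := EReal.exists_between_coe_real hy
      have ht1' : w₀ * Real.log (c₀ / w₀) < t := by exact_mod_cast ht1
      have hcont : Tendsto (fun k => W k * Real.log (C k / W k)) atTop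
          (𝓝 (w₀ * Real.log (c₀ / w₀))) := by
        apply Tendsto.mul hWt
        apply (Real.continuousAt_log (by positivity : c₀ / w₀ ≠ 0)).tendsto.comp
        exact hCt.div hWt (ne_of_gt hwpos)
      filter_upwards [hcont.eventually_lt_const ht1',
        hWt.eventually_const_lt (by linarith : w₀ / 2 < w₀),
        hCt.eventually_const_lt (by linarith : c₀ / 2 < c₀)] with k h1 h2 h3
      have hWk : 0 < W k := lt_trans (by linarith) h2
      have hCk : 0 < C k := lt_trans (by linarith) h3
      rw [hFn, if_neg (ne_of_gt hWk), if_neg (ne_of_gt hCk)]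
      calc ((W k * Real.log (C k / W k) : ℝ) : EReal) < (t : EReal) := by exact_mod_cast h1
        _ < y := hty




lemma coe_sum' {β : Type*} (s : Finset β) (G : β → ℝ) :
    ((∑ g ∈ s, G g : ℝ) : EReal) = ∑ g ∈ s, ((G g : ℝ) : EReal) := by
  classical
  induction s using Finset.induction with
  | empty => simp
  | insert _ _ hx ih =>
      rw [Finset.sum_insert hx, Finset.sum_insert hx, EReal.coe_add, ih]

lemma sum_le_coe_sum {β : Type*} (s : Finset β) (F : β → EReal) (G : β → ℝ)
    (h : ∀ g ∈ s, F g ≤ ((G g : ℝ) : EReal)) :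
    ∑ g ∈ s, F g ≤ ((∑ g ∈ s, G g : ℝ) : EReal) := by
  rw [coe_sum']
  exact Finset.sum_le_sum h

lemma coe_inv_mul_lt_iff {n : ℕ} (hn : 0 < n) {z y : EReal} :
    ((((n : ℝ)⁻¹ : ℝ) : EReal) * z < y) ↔ z < y * (((n : ℝ) : ℝ) : EReal) := by
  have hb : (0 : EReal) < ((n : ℝ) : EReal) := by
    exact_mod_cast (by exact_mod_cast hn : (0:ℝ) < (n:ℝ))
  have hb' : ((n : ℝ) : EReal) ≠ ⊤ := EReal.coe_ne_top _
  have hdiv : ((((n : ℝ)⁻¹ : ℝ) : EReal) * z) = z / ((n : ℝ) : EReal) := by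
    rw [EReal.div_eq_inv_mul, EReal.coe_inv]
  rw [hdiv]
  constructor
  · intro h
    by_contra hle
    push_neg at hle
    have := (EReal.le_div_iff_mul_le hb hb').2 hle
    exact absurd this (not_le.2 h)
  · intro h
    by_contra hle
    push_neg at hle
    have := (EReal.le_div_iff_mul_le hb hb').1 hle
    exact absurd this (not_le.2 h)


lemma map_iterate_le (m : Measure X) (α : X → X) (hmeas : Measurable α) {C : ℝ≥0}
    (hC : ∀ s : Set X, MeasurableSet s → m (α ⁻¹' s) ≤ (C : ℝ≥0∞) * m s) (n : ℕ) :
    m.map (α^[n]) ≤ ((C : ℝ≥0∞) ^ n) • m := by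
  induction n with
  | zero => simp [Function.iterate_zero, Measure.map_id]
  | succ n ih =>
      have hone : m.map α ≤ (C : ℝ≥0∞) • m := by
        refine Measure.le_iff.2 fun s hs => ?_
        rw [Measure.map_apply hmeas hs, Measure.smul_apply, smul_eq_mul]
        exact hC s hs
      have h1 : m.map (α^[n+1]) = (m.map α).map (α^[n]) := by
        rw [Measure.map_map (hmeas.iterate n) hmeas, ← Function.iterate_succ]
      rw [h1]
      calc (m.map α).map (α^[n]) ≤ ((C:ℝ≥0∞) • m).map (α^[n]) :=
            Measure.map_mono hone (hmeas.iterate n)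
        _ = (C:ℝ≥0∞) • (m.map (α^[n])) := by rw [Measure.map_smul]
        _ ≤ (C:ℝ≥0∞) • (((C:ℝ≥0∞)^n) • m) := by
            refine Measure.le_iff.2 fun s hs => ?_
            simp only [Measure.smul_apply, smul_eq_mul]
            exact mul_le_mul_right (by simpa [Measure.smul_apply, smul_eq_mul] using Measure.le_iff.1 ih s hs) _
        _ = ((C:ℝ≥0∞)^(n+1)) • m := by
            rw [smul_smul, ← pow_succ']
  
lemma comp_iterate_bound (m : Measure X) (α : X → X) (hα : ShiftBounded m α) (n : ℕ) :
    ∃ K : ℝ, 1 ≤ K ∧ ∀ f : X → ℝ, f ∈ UnitL1 m →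
      Integrable (fun x => f (α^[n] x)) m ∧ ∫ x, |f (α^[n] x)| ∂m ≤ K := by
  obtain ⟨hmeas, C, hC⟩ := hα
  refine ⟨max ((C:ℝ)^n) 1, le_max_right _ _, fun f hf => ?_⟩
  have hmap := map_iterate_le m α hmeas hC n
  have hac : m.map (α^[n]) ≪ m := Measure.absolutelyContinuous_of_le_smul hmap
  have hsm : AEStronglyMeasurable f (m.map (α^[n])) := hf.1.1.mono_ac hac
  have hcomp : AEStronglyMeasurable (fun x => f (α^[n] x)) m :=
    hsm.comp_measurable (hmeas.iterate n)
  have hlint : ∫⁻ x, ‖f (α^[n] x)‖₊ ∂m = ∫⁻ x, ‖f x‖₊ ∂(m.map (α^[n])) :=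
    (lintegral_map' hsm.enorm (hmeas.iterate n).aemeasurable).symm
  have hle : ∫⁻ x, ‖f x‖₊ ∂(m.map (α^[n])) ≤ ((C:ℝ≥0∞)^n) * ∫⁻ x, ‖f x‖₊ ∂m := by
    calc ∫⁻ x, ‖f x‖₊ ∂(m.map (α^[n])) ≤ ∫⁻ x, ‖f x‖₊ ∂(((C:ℝ≥0∞)^n) • m) :=
          lintegral_mono' hmap le_rfl
      _ = ((C:ℝ≥0∞)^n) * ∫⁻ x, ‖f x‖₊ ∂m := lintegral_smul_measure _ _
  have hfin : ∫⁻ x, ‖f x‖₊ ∂m = 1 := by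
    have h1 : ENNReal.ofReal (∫ x, ‖f x‖ ∂m) = ∫⁻ x, ‖f x‖₊ ∂m :=
      ofReal_integral_norm_eq_lintegral_enorm hf.1
    have h2 : ∫ x, ‖f x‖ ∂m = 1 := by simpa [Real.norm_eq_abs] using hf.2
    rw [← h1, h2]; simp
  have hCn_ne : ((C:ℝ≥0∞)^n) ≠ ⊤ := ENNReal.pow_ne_top ENNReal.coe_ne_top
  have h4 : (∫⁻ x, ‖f (α^[n] x)‖₊ ∂m) ≤ (C:ℝ≥0∞)^n := by
    rw [hlint]
    calc ∫⁻ x, ‖f x‖₊ ∂(m.map (α^[n])) ≤ ((C:ℝ≥0∞)^n) * ∫⁻ x, ‖f x‖₊ ∂m := hle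
      _ = (C:ℝ≥0∞)^n := by rw [hfin, mul_one]
  have hint : Integrable (fun x => f (α^[n] x)) m := by
    refine ⟨hcomp, ?_⟩
    exact lt_of_le_of_lt h4 (lt_top_iff_ne_top.2 hCn_ne)
  have hreal : ∫ x, |f (α^[n] x)| ∂m ≤ (C:ℝ)^n := by
    have h3 : ∫ x, ‖f (α^[n] x)‖ ∂m = (∫⁻ x, ‖f (α^[n] x)‖₊ ∂m).toReal :=
      integral_norm_eq_lintegral_enorm hcomp
    calc ∫ x, |f (α^[n] x)| ∂m = (∫⁻ x, ‖f (α^[n] x)‖₊ ∂m).toReal := by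
          simpa [Real.norm_eq_abs] using h3
      _ ≤ ((C:ℝ≥0∞)^n).toReal := ENNReal.toReal_mono hCn_ne h4
      _ = (C:ℝ)^n := by simp
  exact ⟨hint, hreal.trans (le_max_left _ _)⟩

lemma wInt_bounds (m : Measure X) (α : X → X) (hα : ShiftBounded m α) (n : ℕ)
    (D : Finset (X → ℝ)) (hD : IsPartUnity m D) :
    ∃ K : ℝ, 1 ≤ K ∧ ∀ f ∈ UnitL1 m, ∀ g ∈ D, 0 ≤ wInt m α n g f ∧ wInt m α n g f ≤ K := by
  obtain ⟨K, hK1, hKf⟩ := comp_iterate_bound m α hα n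
  refine ⟨K, hK1, fun f hf g hg => ?_⟩
  obtain ⟨hint, hb⟩ := hKf f hf
  have hg0 : (0 : X → ℝ) ≤ᵐ[m] g := (hD.1 g hg).2
  have hg1 : ∀ᵐ x ∂m, g x ≤ 1 := by
    have hall : ∀ᵐ x ∂m, ∀ g' ∈ D, (0:X→ℝ) x ≤ g' x := by
      rw [Filter.eventually_all_finset]
      intro g' hg'; exact (hD.1 g' hg').2
    filter_upwards [hall, hD.2] with x hx hsum
    calc g x ≤ ∑ g' ∈ D, g' x :=
          Finset.single_le_sum (fun g' hg' => by simpa using hx g' hg') hg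
      _ = 1 := hsum
  constructor
  · rw [wInt]
    apply integral_nonneg_of_ae
    filter_upwards [hg0] with x hx
    exact mul_nonneg (by simpa using hx) (abs_nonneg _)
  · rw [wInt]
    have hmono : ∫ x, g x * |f (α^[n] x)| ∂m ≤ ∫ x, |f (α^[n] x)| ∂m := by
      apply integral_mono_of_nonneg
      · filter_upwards [hg0] with x hx; exact mul_nonneg (by simpa using hx) (abs_nonneg _)
      · exact hint.abs
      · filter_upwards [hg0, hg1] with x hx0 hx1
        exact mul_le_of_le_one_left (abs_nonneg _) hx1
    exact hmono.trans hb

lemma toFun_zero (m : Measure X) (μ : PosFunctional m) : μ.toFun 0 = 0 := by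
  have h1 : ((0:ℝ) • (fun _ : X => (1:ℝ))) = (0 : X → ℝ) := by funext x; simp
  have h2 := μ.map_smul' 0 (fun _ => 1) (memLp_top_const 1)
  rw [h1] at h2; simpa using h2

lemma tauND_eq_sup (m : Measure X) (α : X → X) (μ : PosFunctional m) (n : ℕ)
    (D : Finset (X → ℝ)) (hD : IsPartUnity m D) :
    tauND m α μ n D = ⨆ f ∈ UnitL1 m, ∑ g ∈ D, tauTermR m α n (μ.toFun g) f g := by
  rw [tauND, tauNDW, if_neg]
  rintro ⟨g, hgD, hg0, hgpos⟩
  have hmem := (hD.1 g hgD).1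
  have hnn := (hD.1 g hgD).2
  have hae : (fun x => ENNReal.ofReal (g x)) =ᵐ[m] 0 :=
    (lintegral_eq_zero_iff'
      (ENNReal.measurable_ofReal.comp_aemeasurable hmem.aestronglyMeasurable.aemeasurable)).1 hg0
  have hgz : g =ᵐ[m] (0 : X → ℝ) := by
    filter_upwards [hae, hnn] with x hx hx0
    have hx' : ENNReal.ofReal (g x) = 0 := hx
    rw [ENNReal.ofReal_eq_zero] at hx'
    simpa using le_antisymm hx' (by simpa using hx0)
  have hz : μ.toFun g = 0 := by
    rw [μ.congr_ae' g 0 hmem MemLp.zero hgz, toFun_zero]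
  rw [hz] at hgpos
  exact lt_irrefl 0 hgpos

lemma eventually_close (m : Measure X) (μ₀ : PosFunctional m) (D : Finset (X → ℝ))
    (hD : ∀ g ∈ D, MemLp g ⊤ m) {δ : ℝ} (hδ : 0 < δ) :
    ∀ᶠ μ : PosFunctional m in 𝓝 μ₀, ∀ g ∈ D, |μ.toFun g - μ₀.toFun g| < δ := by
  rw [Filter.eventually_all_finset]
  intro g hg
  have hcont : Continuous fun μ : PosFunctional m => μ.toFun g := by
    have h1 : Continuous (evalMap m) := continuous_induced_dom
    exact (continuous_apply (⟨g, hD g hg⟩ : {f : X → ℝ // MemLp f ⊤ m})).comp h1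
  have htend : Tendsto (fun μ : PosFunctional m => μ.toFun g) (𝓝 μ₀) (𝓝 (μ₀.toFun g)) :=
    hcont.tendsto μ₀
  have hball : ∀ᶠ t : ℝ in 𝓝 (μ₀.toFun g), |t - μ₀.toFun g| < δ := by
    have := Metric.ball_mem_nhds (μ₀.toFun g) hδ
    filter_upwards [this] with t ht
    simpa [Real.dist_eq] using ht
  exact htend.eventually hball

lemma tauTermR_def (m : Measure X) (α : X → X) (n : ℕ) (w : ℝ) (f g : X → ℝ) :
    tauTermR m α n w f g = hFn w (wInt m α n g f) := rfl

lemma sup_usc (m : Measure X) (α : X → X) (hα : ShiftBounded m α) (n : ℕ)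
    (D : Finset (X → ℝ)) (hD : IsPartUnity m D) (v₀ : (X → ℝ) → ℝ)
    (hv₀ : ∀ g ∈ D, 0 ≤ v₀ g) {y : EReal}
    (hy : (⨆ f ∈ UnitL1 m, ∑ g ∈ D, tauTermR m α n (v₀ g) f g) < y) :
    ∃ δ : ℝ, 0 < δ ∧ ∀ w : (X → ℝ) → ℝ,
      (∀ g ∈ D, 0 ≤ w g ∧ |w g - v₀ g| < δ) →
      (⨆ f ∈ UnitL1 m, ∑ g ∈ D, tauTermR m α n (w g) f g) < y := by
  obtain ⟨K, hK1, hKb⟩ := wInt_bounds m α hα n D hD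
  by_contra hcon
  push_neg at hcon
  have hcon' : ∀ k : ℕ, ∃ w : (X → ℝ) → ℝ,
      (∀ g ∈ D, 0 ≤ w g ∧ |w g - v₀ g| < 1/(k+1)) ∧
      y ≤ ⨆ f ∈ UnitL1 m, ∑ g ∈ D, tauTermR m α n (w g) f g := by
    intro k
    obtain ⟨w, hw1, hw2⟩ := hcon (1/(k+1)) (by positivity)
    exact ⟨w, hw1, hw2⟩
  choose w hw hyw using hcon'
  obtain ⟨y₂, hy₂G, hy₂y⟩ := EReal.exists_between_coe_real hy
  obtain ⟨y₁, hy₁G, hy₁₂⟩ := EReal.exists_between_coe_real hy₂G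
  have hy₁₂' : y₁ < y₂ := by exact_mod_cast hy₁₂
  have hfk : ∀ k : ℕ, ∃ f, f ∈ UnitL1 m ∧
      (y₂ : EReal) < ∑ g ∈ D, tauTermR m α n (w k g) f g := by
    intro k
    have h1 : (y₂ : EReal) < ⨆ f ∈ UnitL1 m, ∑ g ∈ D, tauTermR m α n (w k g) f g :=
      lt_of_lt_of_le hy₂y (hyw k)
    rw [lt_iSup_iff] at h1
    obtain ⟨f, hf⟩ := h1
    rw [lt_iSup_iff] at hf
    obtain ⟨hfU, hf2⟩ := hf
    exact ⟨f, hfU, hf2⟩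
  choose f hfU hfT using hfk
  have hcmem : ∀ k, (fun g : {g // g ∈ D} => wInt m α n g.1 (f k)) ∈
      Set.pi Set.univ (fun _ : {g // g ∈ D} => Set.Icc (0:ℝ) K) := by
    intro k g _
    exact ⟨(hKb (f k) (hfU k) g.1 g.2).1, (hKb (f k) (hfU k) g.1 g.2).2⟩
  obtain ⟨cstar, hcstarmem, φ, hφ, hctend⟩ :=
    (isCompact_univ_pi (fun _ : {g // g ∈ D} => isCompact_Icc)).tendsto_subseq hcmem
  have hcoord : ∀ g : {g // g ∈ D},
      Tendsto (fun k => wInt m α n g.1 (f (φ k))) atTop (𝓝 (cstar g)) := by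
    intro g
    exact (tendsto_pi_nhds.1 hctend) g
  have hcs0 : ∀ g : {g // g ∈ D}, 0 ≤ cstar g := fun g => (hcstarmem g (Set.mem_univ g)).1
  have hwtend : ∀ g : {g // g ∈ D}, Tendsto (fun k => w (φ k) g.1) atTop (𝓝 (v₀ g.1)) := by
    intro g
    rw [tendsto_iff_dist_tendsto_zero]
    apply squeeze_zero (fun k => dist_nonneg) (fun k => ?_)
      tendsto_one_div_add_atTop_nhds_zero_nat
    have h1 := (hw (φ k) g.1 g.2).2
    have h2 : (1:ℝ)/(φ k + 1) ≤ 1/(k+1) := by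
      apply one_div_le_one_div_of_le (by positivity)
      have h3 : (k:ℝ) ≤ (φ k : ℝ) := by exact_mod_cast hφ.le_apply
      linarith
    calc dist (w (φ k) g.1) (v₀ g.1) = |w (φ k) g.1 - v₀ g.1| := Real.dist_eq _ _
      _ ≤ 1/(k+1) := le_trans h1.le h2
  have hw0 : ∀ k, ∀ g ∈ D, 0 ≤ w k g := fun k g hg => (hw k g hg).1
  have hwub : ∀ k, ∀ g ∈ D, w k g ≤ (∑ g' ∈ D, v₀ g') + 1 := by
    intro k g hg
    have h1 := (hw k g hg).2
    have h2 : w k g < v₀ g + 1 := by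
      have habs := abs_lt.1 h1
      have h3 : (1:ℝ)/(k+1) ≤ 1 := by
        rw [div_le_one (by positivity)]
        linarith [Nat.cast_nonneg (α := ℝ) k]
      linarith [habs.2]
    have h4 : v₀ g ≤ ∑ g' ∈ D, v₀ g' := Finset.single_le_sum (fun g' hg' => hv₀ g' hg') hg
    linarith
  set M₀ : ℝ := (∑ g' ∈ D, v₀ g') + 1 with hM₀
  have hM₀1 : 1 ≤ M₀ := by
    have h0 : 0 ≤ ∑ g' ∈ D, v₀ g' := Finset.sum_nonneg (fun g' hg' => hv₀ g' hg')
    rw [hM₀]; linarith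
  set B : ℝ := M₀ * Real.log K + 2 * Real.sqrt M₀ with hB
  have hB0 : 0 ≤ B := by
    have h1 := Real.log_nonneg hK1
    have h2 : 0 ≤ Real.sqrt M₀ := Real.sqrt_nonneg _
    rw [hB]; nlinarith
  have hBbound : ∀ k, ∀ g : {g // g ∈ D},
      hFn (w k g.1) (wInt m α n g.1 (f k)) ≤ (B : EReal) := by
    intro k g
    calc hFn (w k g.1) (wInt m α n g.1 (f k))
        ≤ ((w k g.1 * Real.log K + 2 * Real.sqrt (w k g.1) : ℝ) : EReal) :=
          hFn_le_rho hK1 (hw0 k g.1 g.2) (hKb (f k) (hfU k) g.1 g.2).1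
            (hKb (f k) (hfU k) g.1 g.2).2
      _ ≤ (B : EReal) := by
          rw [EReal.coe_le_coe_iff, hB]
          have h1 : w k g.1 * Real.log K ≤ M₀ * Real.log K :=
            mul_le_mul_of_nonneg_right (hwub k g.1 g.2) (Real.log_nonneg hK1)
          have h2 : Real.sqrt (w k g.1) ≤ Real.sqrt M₀ := Real.sqrt_le_sqrt (hwub k g.1 g.2)
          linarith
  have hsum_eq : ∀ k, ∑ g ∈ D, tauTermR m α n (w (φ k) g) (f (φ k)) g
      = ∑ g ∈ D.attach, hFn (w (φ k) g.1) (wInt m α n g.1 (f (φ k))) := by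
    intro k
    rw [Finset.sum_attach D (fun g => hFn (w (φ k) g) (wInt m α n g (f (φ k))))]
    exact Finset.sum_congr rfl (fun g _ => tauTermR_def m α n _ _ _)
  by_cases hA : ∃ g : {g // g ∈ D}, v₀ g.1 ≠ 0 ∧ cstar g = 0
  · -- Case A
    obtain ⟨g₀, hg₀v, hg₀c⟩ := hA
    set r : ℝ := y₂ - (D.card : ℝ) * B - 1 with hr
    have hbotr : hFn (v₀ g₀.1) (cstar g₀) < (r : EReal) := by
      rw [hFn, if_neg hg₀v, if_pos hg₀c]
      exact EReal.bot_lt_coe r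
    have hev := hFn_usc hK1 (hv₀ g₀.1 g₀.2) (hcs0 g₀) hbotr
      (fun k => w (φ k) g₀.1) (fun k => wInt m α n g₀.1 (f (φ k)))
      (fun k => hw0 (φ k) g₀.1 g₀.2)
      (fun k => ⟨(hKb (f (φ k)) (hfU (φ k)) g₀.1 g₀.2).1,
        (hKb (f (φ k)) (hfU (φ k)) g₀.1 g₀.2).2⟩)
      (hwtend g₀) (hcoord g₀)
    obtain ⟨k, hk⟩ := hev.exists
    have hlt := hfT (φ k)
    rw [hsum_eq k] at hlt
    have hsplit : ∑ g ∈ D.attach, hFn (w (φ k) g.1) (wInt m α n g.1 (f (φ k)))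
        = hFn (w (φ k) g₀.1) (wInt m α n g₀.1 (f (φ k)))
          + ∑ g ∈ D.attach.erase g₀, hFn (w (φ k) g.1) (wInt m α n g.1 (f (φ k))) :=
      (Finset.add_sum_erase _ _ (Finset.mem_attach D g₀)).symm
    have herase : ∑ g ∈ D.attach.erase g₀, hFn (w (φ k) g.1) (wInt m α n g.1 (f (φ k)))
        ≤ ((((D.attach.erase g₀).card : ℝ) * B : ℝ) : EReal) := by
      have h5 := sum_le_coe_sum (D.attach.erase g₀)
        (fun g => hFn (w (φ k) g.1) (wInt m α n g.1 (f (φ k)))) (fun _ => B)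
        (fun g _ => hBbound (φ k) g)
      simpa [Finset.sum_const, nsmul_eq_mul] using h5
    have hcard : ((D.attach.erase g₀).card : ℝ) * B ≤ (D.card : ℝ) * B := by
      apply mul_le_mul_of_nonneg_right _ hB0
      have h1 : (D.attach.erase g₀).card ≤ D.attach.card :=
        Finset.card_le_card (Finset.erase_subset _ _)
      rw [Finset.card_attach] at h1
      exact_mod_cast h1
    have htot : ∑ g ∈ D.attach, hFn (w (φ k) g.1) (wInt m α n g.1 (f (φ k)))
        ≤ ((y₂ - 1 : ℝ) : EReal) := by
      rw [hsplit]
      calc hFn (w (φ k) g₀.1) (wInt m α n g₀.1 (f (φ k)))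
            + ∑ g ∈ D.attach.erase g₀, hFn (w (φ k) g.1) (wInt m α n g.1 (f (φ k)))
          ≤ (r : EReal) + ((((D.attach.erase g₀).card : ℝ) * B : ℝ) : EReal) :=
            add_le_add hk.le herase
        _ = ((r + ((D.attach.erase g₀).card : ℝ) * B : ℝ) : EReal) := by
            rw [EReal.coe_add]
        _ ≤ ((y₂ - 1 : ℝ) : EReal) := by
            rw [EReal.coe_le_coe_iff, hr]; linarith
    have hfinal : (y₂ : EReal) < ((y₂ - 1 : ℝ) : EReal) := lt_of_lt_of_le hlt htot
    rw [EReal.coe_lt_coe_iff] at hfinal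
    linarith
  · -- Case B
    push_neg at hA
    have hcpos : ∀ g : {g // g ∈ D}, v₀ g.1 ≠ 0 → 0 < cstar g :=
      fun g hg => lt_of_le_of_ne (hcs0 g) (Ne.symm (hA g hg))
    set L : {g // g ∈ D} → ℝ :=
      fun g => if v₀ g.1 = 0 then 0 else v₀ g.1 * Real.log (cstar g / v₀ g.1) with hL
    set S : ℝ := ∑ g ∈ D.attach, L g with hS
    have hRtend : Tendsto (fun k => ∑ g ∈ D.attach,
        (if v₀ g.1 = 0 then 0 else v₀ g.1 * Real.log (wInt m α n g.1 (f (φ k)) / v₀ g.1)))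
        atTop (𝓝 S) := by
      rw [hS]
      apply tendsto_finset_sum
      intro g _
      by_cases hg : v₀ g.1 = 0
      · simp only [hL, if_pos hg]
        exact tendsto_const_nhds
      · simp only [hL, if_neg hg]
        apply Tendsto.const_mul
        have hvpos : 0 < v₀ g.1 := lt_of_le_of_ne (hv₀ g.1 g.2) (Ne.symm hg)
        have hq : (0:ℝ) < cstar g / v₀ g.1 := div_pos (hcpos g hg) hvpos
        exact (Real.continuousAt_log (ne_of_gt hq)).tendsto.comp ((hcoord g).div_const _)
    have hEq : ∀ᶠ k in atTop, ∀ g ∈ D.attach,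
        hFn (v₀ g.1) (wInt m α n g.1 (f (φ k)))
        = (((if v₀ g.1 = 0 then 0
            else v₀ g.1 * Real.log (wInt m α n g.1 (f (φ k)) / v₀ g.1)) : ℝ) : EReal) := by
      rw [Filter.eventually_all_finset]
      intro g _
      by_cases hg : v₀ g.1 = 0
      · apply Filter.Eventually.of_forall
        intro k
        rw [hFn, if_pos hg, if_pos hg]
        simp
      · have hpos := hcpos g hg
        filter_upwards [(hcoord g).eventually_const_lt (half_lt_self hpos)] with k hk
        have hck : 0 < wInt m α n g.1 (f (φ k)) := lt_trans (half_pos hpos) hk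
        rw [hFn, if_neg hg, if_neg (ne_of_gt hck), if_neg hg]
    have hSle : S ≤ y₁ := by
      apply le_of_tendsto hRtend
      filter_upwards [hEq] with k hk
      have h1 : ∑ g ∈ D.attach, hFn (v₀ g.1) (wInt m α n g.1 (f (φ k)))
          = ((∑ g ∈ D.attach, (if v₀ g.1 = 0 then 0
              else v₀ g.1 * Real.log (wInt m α n g.1 (f (φ k)) / v₀ g.1)) : ℝ) : EReal) := by
        rw [coe_sum']
        exact Finset.sum_congr rfl hk
      have h2 : ∑ g ∈ D.attach, hFn (v₀ g.1) (wInt m α n g.1 (f (φ k)))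
          ≤ ⨆ f' ∈ UnitL1 m, ∑ g ∈ D, tauTermR m α n (v₀ g) f' g := by
        have h3 : ∑ g ∈ D.attach, hFn (v₀ g.1) (wInt m α n g.1 (f (φ k)))
            = ∑ g ∈ D, tauTermR m α n (v₀ g) (f (φ k)) g := by
          rw [Finset.sum_attach D (fun g => hFn (v₀ g) (wInt m α n g (f (φ k))))]
          exact Finset.sum_congr rfl (fun g _ => (tauTermR_def m α n _ _ _).symm)
        rw [h3]
        exact le_iSup₂ (f := fun f' (_ : f' ∈ UnitL1 m) =>
          ∑ g ∈ D, tauTermR m α n (v₀ g) f' g) (f (φ k)) (hfU (φ k))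
      rw [h1] at h2
      have h4 : ((∑ g ∈ D.attach, (if v₀ g.1 = 0 then 0
          else v₀ g.1 * Real.log (wInt m α n g.1 (f (φ k)) / v₀ g.1)) : ℝ) : EReal)
          < (y₁ : EReal) := lt_of_le_of_lt h2 hy₁G
      exact (EReal.coe_lt_coe_iff.1 h4).le
    set ε : ℝ := (y₂ - y₁) / (D.card + 1) with hε
    have hεpos : 0 < ε := by
      rw [hε]; apply div_pos (by linarith) (by positivity)
    have hUSC : ∀ g : {g // g ∈ D}, ∀ᶠ k in atTop,
        hFn (w (φ k) g.1) (wInt m α n g.1 (f (φ k))) < ((L g + ε : ℝ) : EReal) := by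
      intro g
      have hval : hFn (v₀ g.1) (cstar g) = ((L g : ℝ) : EReal) := by
        by_cases hg : v₀ g.1 = 0
        · rw [hFn, if_pos hg, hL]; simp [hg]
        · rw [hFn, if_neg hg, if_neg (ne_of_gt (hcpos g hg)), hL]
          simp [hg]
      have hlty : hFn (v₀ g.1) (cstar g) < ((L g + ε : ℝ) : EReal) := by
        rw [hval, EReal.coe_lt_coe_iff]; linarith
      exact hFn_usc hK1 (hv₀ g.1 g.2) (hcs0 g) hlty
        (fun k => w (φ k) g.1) (fun k => wInt m α n g.1 (f (φ k)))
        (fun k => hw0 (φ k) g.1 g.2)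
        (fun k => ⟨(hKb (f (φ k)) (hfU (φ k)) g.1 g.2).1,
          (hKb (f (φ k)) (hfU (φ k)) g.1 g.2).2⟩)
        (hwtend g) (hcoord g)
    have hall : ∀ᶠ k in atTop, ∀ g ∈ D.attach,
        hFn (w (φ k) g.1) (wInt m α n g.1 (f (φ k))) < ((L g + ε : ℝ) : EReal) := by
      rw [Filter.eventually_all_finset]
      intro g _
      exact hUSC g
    obtain ⟨k, hk⟩ := hall.exists
    have hlt := hfT (φ k)
    rw [hsum_eq k] at hlt
    have hsb : ∑ g ∈ D.attach, hFn (w (φ k) g.1) (wInt m α n g.1 (f (φ k)))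
        ≤ ((∑ g ∈ D.attach, (L g + ε) : ℝ) : EReal) :=
      sum_le_coe_sum _ _ _ (fun g hg => (hk g hg).le)
    have hsum2 : ∑ g ∈ D.attach, (L g + ε) = S + (D.card : ℝ) * ε := by
      rw [Finset.sum_add_distrib, Finset.sum_const, Finset.card_attach, nsmul_eq_mul, hS]
    rw [hsum2] at hsb
    have hfinal : (y₂ : EReal) < ((S + (D.card : ℝ) * ε : ℝ) : EReal) := lt_of_lt_of_le hlt hsb
    rw [EReal.coe_lt_coe_iff] at hfinal
    have heq : ε * ((D.card : ℝ) + 1) = y₂ - y₁ := by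
      rw [hε]; field_simp
    nlinarith [hεpos, hSle]

lemma tauND_usc (m : Measure X) (α : X → X) (hα : ShiftBounded m α) (n : ℕ)
    (D : Finset (X → ℝ)) (hD : IsPartUnity m D) (μ₀ : PosFunctional m) {y : EReal}
    (hy : tauND m α μ₀ n D < y) :
    ∀ᶠ μ : PosFunctional m in 𝓝 μ₀, tauND m α μ n D < y := by
  rw [tauND_eq_sup m α μ₀ n D hD] at hy
  obtain ⟨δ, hδ, hball⟩ := sup_usc m α hα n D hD (fun g => μ₀.toFun g)
    (fun g hg => μ₀.nonneg' g (hD.1 g hg).1 (hD.1 g hg).2) hy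
  filter_upwards [eventually_close m μ₀ D (fun g hg => (hD.1 g hg).1) hδ] with μ hμ
  rw [tauND_eq_sup m α μ n D hD]
  exact hball (fun g => μ.toFun g)
    (fun g hg => ⟨μ.nonneg' g (hD.1 g hg).1 (hD.1 g hg).2, hμ g hg⟩)


/-- The `t`-entropy functional `μ ↦ τ(μ)` is upper semicontinuous on `M(X,m)` with
respect to the weak-* topology. -/
theorem tEntropy_upperSemicontinuous
    (m : Measure X) [SigmaFinite m] (α : X → X) (hα : ShiftBounded m α) :
    UpperSemicontinuous (fun μ : PosFunctional m => tEntropy m α μ) := by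
  intro μ₀ y hy
  simp only [tEntropy] at hy
  rw [iInf_lt_iff] at hy
  obtain ⟨⟨n, hn⟩, hlt⟩ := hy
  rw [coe_inv_mul_lt_iff hn] at hlt
  rw [tauN, iInf_lt_iff] at hlt
  obtain ⟨D, hDlt⟩ := hlt
  rw [iInf_lt_iff] at hDlt
  obtain ⟨hDmem, hDlt⟩ := hDlt
  have hDpart : IsPartUnity m D := hDmem
  filter_upwards [tauND_usc m α hα n D hDpart μ₀ hDlt] with μ hμ
  have h1 : tEntropy m α μ ≤ ((((n : ℕ) : ℝ)⁻¹ : ℝ) : EReal) * tauN m α μ n :=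
    iInf_le _ (⟨n, hn⟩ : {k : ℕ // 0 < k})
  have h2 : tauN m α μ n ≤ tauND m α μ n D := by
    rw [tauN]
    exact iInf₂_le D hDmem
  have h3 : tauN m α μ n < y * (((n : ℝ) : ℝ) : EReal) := lt_of_le_of_lt h2 hμ
  exact lt_of_le_of_lt h1 ((coe_inv_mul_lt_iff hn).2 h3)

end TEntropyPaper
end
end
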